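/- arXiv:1511.06664 — 3 statements merged into one kernel-verified Lean document; each statement's English description precedes it below -/
import Mathlib

section
/- Let C be an m×n Cauchon diagram with associated permutation v, let k ∈ {n+1,...,m+n-1}, and let (x_1,y_1),...,(x_t,y_t) be the chain rooted at box k on the south-east border. Then ({1,...,m} \ {x_1,...,x_t}) ∪ {y_1,...,y_t} = ({1,...,m+n} \ v({1,...,k})) ∪ {1,...,k-n}, where v({1,...,k}) denotes the image of {1,...,k} under v. -/
/-- The transposition `s_{a+b-m-1} = (a+b-m-1, a+b-m)` assigned to the grid square `(a,b)`. -/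
def sqPerm (m : ℕ) (p : ℕ × ℕ) : Equiv.Perm ℕ :=
  Equiv.swap (p.1 + p.2 - m - 1) (p.1 + p.2 - m)

/-- The reading word of the set of grid squares satisfying `P`: rows are read from the
top (`a = m`) down to the bottom (`a = 1`), and within each row columns are read from the
left (`b = m+1`) to the right (`b = m+n`); factors are multiplied so that the last factor
in reading order is applied first. -/
def readingWord (m n : ℕ) (P : ℕ × ℕ → Bool) : Equiv.Perm ℕ :=
  ((List.range m).map fun i =>
    (((List.range n).map fun j =>
      if P (m - i, m + 1 + j) then sqPerm m (m - i, m + 1 + j) else 1)).prod).prod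

/-- `(a,b)` is a square of the `m × n` grid: `1 ≤ a ≤ m`, `m+1 ≤ b ≤ m+n`. -/
def InGrid (m n : ℕ) (p : ℕ × ℕ) : Prop :=
  1 ≤ p.1 ∧ p.1 ≤ m ∧ m + 1 ≤ p.2 ∧ p.2 ≤ m + n

/-- A colouring (`true` = black, `false` = white) is a Cauchon diagram if for every black
square `(a,b)`, either every square `(a,b')` with `b' < b` is black, or every square
`(a',b)` with `a' > a` is black. -/
def IsCauchon (m n : ℕ) (col : ℕ × ℕ → Bool) : Prop :=
  ∀ a b, InGrid m n (a, b) → col (a, b) = true →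
    (∀ b', m + 1 ≤ b' → b' < b → col (a, b') = true) ∨
    (∀ a', a < a' → a' ≤ m → col (a', b) = true)

/-- The permutation associated to a colouring: the reading word of its set of black squares. -/
def assocPerm (m n : ℕ) (col : ℕ × ℕ → Bool) : Equiv.Perm ℕ :=
  readingWord m n col

/-- `v_{x,y}`: the reading word of the black squares `(a,b)` with `a ≥ x` and `b ≤ y`. -/
def vAt (m n : ℕ) (col : ℕ × ℕ → Bool) (x y : ℕ) : Equiv.Perm ℕ :=
  readingWord m n fun p => col p && decide (x ≤ p.1) && decide (p.2 ≤ y)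

/-- `w_{x,y}`: the reading word of all grid squares `(a,b)` with `a ≥ x` and `b ≤ y`. -/
def wAt (m n x y : ℕ) : Equiv.Perm ℕ :=
  readingWord m n fun p => decide (x ≤ p.1) && decide (p.2 ≤ y)

/-- Box `k` on the south-east border: `(1, m+k)` if `k ≤ n`, and `(k-n+1, m+n)` otherwise. -/
def boxSE (m n k : ℕ) : ℕ × ℕ :=
  if k ≤ n then (1, m + k) else (k - n + 1, m + n)

/-- `(X 1, Y 1), ..., (X t, Y t)` is the chain rooted at the square `(x,y)` of the colouring
`col` (with `t = 0` for the empty chain). -/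
def IsChainRootedAt (m n : ℕ) (col : ℕ × ℕ → Bool) (x y : ℕ)
    (t : ℕ) (X Y : ℕ → ℕ) : Prop :=
  -- every member of the chain is a white square of the grid
  (∀ i, 1 ≤ i → i ≤ t → InGrid m n (X i, Y i) ∧ col (X i, Y i) = false) ∧
  -- if `(x,y)` is white, the chain starts at `(x,y)`
  (col (x, y) = false → 1 ≤ t ∧ X 1 = x ∧ Y 1 = y) ∧
  -- if `(x,y)` is black and the chain is nonempty, it starts at the white square
  -- weakly north-west of `(x,y)` nearest to it
  (col (x, y) = true → 1 ≤ t →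
    x ≤ X 1 ∧ Y 1 ≤ y ∧
      ∀ a b, InGrid m n (a, b) → col (a, b) = false → x ≤ a → b ≤ y →
        X 1 ≤ a ∧ b ≤ Y 1) ∧
  -- the chain is empty only when there is no white square weakly north-west of `(x,y)`
  (t = 0 → ∀ a b, InGrid m n (a, b) → col (a, b) = false → x ≤ a → b ≤ y → False) ∧
  -- inductive step: each next member is the nearest white square strictly north-west
  (∀ i, 1 ≤ i → i < t →
    X i < X (i + 1) ∧ Y (i + 1) < Y i ∧
      ∀ a b, InGrid m n (a, b) → col (a, b) = false → X i < a → b < Y i →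
        X (i + 1) ≤ a ∧ b ≤ Y (i + 1)) ∧
  -- termination: no white square strictly north-west of the last member
  (1 ≤ t → ∀ a b, InGrid m n (a, b) → col (a, b) = false → X t < a → b < Y t → False)

/- ## auxiliary lemmas -/

theorem prod_apply_fixed (l : List (Equiv.Perm ℕ)) (x : ℕ)
    (h : ∀ p ∈ l, p x = x) : l.prod x = x := by
  induction l with
  | nil => simp
  | cons p l ih =>
    simp only [List.prod_cons, Equiv.Perm.mul_apply]
    rw [ih (fun q hq => h q (List.mem_cons_of_mem _ hq)), h p List.mem_cons_self]

theorem readingWord_apply_of_out (m n : ℕ) (P : ℕ × ℕ → Bool) (x : ℕ)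
    (hx : x = 0 ∨ m + n < x) : readingWord m n P x = x := by
  apply prod_apply_fixed
  intro p hp
  simp only [List.mem_map, List.mem_range] at hp
  obtain ⟨i, hi, rfl⟩ := hp
  apply prod_apply_fixed
  intro q hq
  simp only [List.mem_map, List.mem_range] at hq
  obtain ⟨j, hj, rfl⟩ := hq
  split
  · show Equiv.swap _ _ x = x
    apply Equiv.swap_apply_of_ne_of_ne <;>
    · simp only [sqPerm]
      omega
  · rfl

/-- a perm fixing everything outside `Icc 1 N` maps `Icc 1 N` to itself. -/
theorem perm_mem_of_fix (v : Equiv.Perm ℕ) (N : ℕ)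
    (hv : ∀ x, x = 0 ∨ N < x → v x = x) (j : ℕ) (hj : j ∈ Finset.Icc 1 N) :
    v j ∈ Finset.Icc 1 N := by
  simp only [Finset.mem_Icc] at *
  by_contra h
  have h0 : v j = 0 ∨ N < v j := by omega
  have := hv (v j) h0
  have : v (v j) = v j := this
  have := v.injective this
  omega
/- ## splitting off the top row -/

/-- the reading word of the single top row `m`. -/
def rowG (col : ℕ × ℕ → Bool) (m b : ℕ) : Equiv.Perm ℕ :=
  if col (m, b) then Equiv.swap (b - 1) b else 1

/-- product of `rowG` over columns `c, c+1, ..., m+n`. -/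
def rowV (col : ℕ × ℕ → Bool) (m n c : ℕ) : Equiv.Perm ℕ :=
  ((List.range (m + n + 1 - c)).map fun j => rowG col m (c + j)).prod

theorem readingWord_split (m n : ℕ) (P : ℕ × ℕ → Bool) (hm : 1 ≤ m) :
    readingWord m n P =
      rowV P m n (m + 1) * readingWord (m - 1) n (fun p => P (p.1, p.2 + 1)) := by
  obtain ⟨m, rfl⟩ : ∃ m', m = m' + 1 := ⟨m - 1, by omega⟩
  simp only [readingWord, List.range_succ_eq_map, List.map_cons, List.prod_cons,
    List.map_map, Nat.add_sub_cancel]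
  congr 1
  · -- top row equals rowV
    simp only [rowV, Nat.sub_self, Nat.add_sub_cancel_left]
    have : m + 1 + n + 1 - (m + 1 + 1) = n := by omega
    rw [this]
    congr 1
    apply List.map_congr_left
    intro j hj
    simp only [rowG, sqPerm, Nat.sub_zero]
    by_cases hcol : P (m + 1, m + 1 + 1 + j) = true
    · rw [if_pos hcol, if_pos hcol]
      congr 1 <;> omega
    · rw [if_neg hcol, if_neg hcol]
  · -- remaining rows
    apply congrArg
    apply List.map_congr_left
    intro i hi
    simp only [List.mem_range] at hi
    simp only [Function.comp_apply, Nat.succ_eq_add_one]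
    apply congrArg
    apply List.map_congr_left
    intro j hj
    have ha : m + 1 - (i + 1) = m - i := by omega
    have hb : m + 1 + 1 + j = (m + 1 + j) + 1 := by omega
    rw [ha, hb]
    by_cases hcol : P (m - i, m + 1 + j + 1) = true
    · rw [if_pos hcol, if_pos hcol]
      simp only [sqPerm]
      congr 1 <;> omega
    · rw [if_neg hcol, if_neg hcol]
/- ## slide -/
def slide (f : ℕ → Bool) : ℕ → ℕ
  | x => if 0 < x ∧ f x = true then slide f (x - 1) else x
termination_by x => x
decreasing_by omega

theorem slide_le (f : ℕ → Bool) (x : ℕ) : slide f x ≤ x := by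
  induction x using Nat.strong_induction_on with
  | _ x ih =>
    rw [slide]
    split
    · exact le_trans (le_trans (ih (x-1) (by omega)) (by omega)) (le_refl x)
    · exact le_refl x

theorem slide_stop (f : ℕ → Bool) (x : ℕ) : ¬(0 < slide f x ∧ f (slide f x) = true) := by
  induction x using Nat.strong_induction_on with
  | _ x ih =>
    rw [slide]
    split
    · rename_i h
      exact ih (x-1) (by omega)
    · assumption

theorem slide_lb (f : ℕ → Bool) (lo : ℕ) (hf : ∀ y, f y = true → lo + 1 ≤ y) :
    ∀ x, lo ≤ x → lo ≤ slide f x := by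
  intro x
  induction x using Nat.strong_induction_on with
  | _ x ih =>
    intro hx
    rw [slide]
    split
    · rename_i h
      have := hf x h.2
      exact ih (x-1) (by omega) (by omega)
    · exact hx

theorem slide_eq (f : ℕ → Bool) (z x : ℕ) (hz : z ≤ x) (hfz : f z = false)
    (hall : ∀ y, z < y → y ≤ x → f y = true) : slide f x = z := by
  induction x using Nat.strong_induction_on with
  | _ x ih =>
    rw [slide]
    rcases Nat.eq_or_lt_of_le hz with h | h
    · subst h
      rw [if_neg (by simp [hfz])]
    · rw [if_pos ⟨by omega, hall x h (le_refl x)⟩]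
      exact ih (x-1) (by omega) (by omega) (fun y h1 h2 => hall y h1 (by omega))

theorem slide_comp (f g : ℕ → Bool) (hfg : ∀ y, g y = true → f y = true) (x : ℕ) :
    slide f x = slide f (slide g x) := by
  induction x using Nat.strong_induction_on with
  | _ x ih =>
    by_cases h : 0 < x ∧ g x = true
    · have hg : slide g x = slide g (x - 1) := by rw [slide, if_pos h]
      have hf : slide f x = slide f (x - 1) := by rw [slide, if_pos ⟨h.1, hfg x h.2⟩]
      rw [hg, hf, ih (x-1) (by omega)]
    · have hg : slide g x = x := by rw [slide, if_neg h]
      rw [hg]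

theorem and3_false {p q : Prop} [Decidable p] [Decidable q] (b : Bool)
    (h : ¬p ∨ ¬q ∨ b = false) : (decide p && decide q && b) = false := by
  rcases h with h | h | h <;> simp [h]

/- ## evaluation of the row word -/

theorem rowV_succ (col : ℕ × ℕ → Bool) (m n c : ℕ) (hc : c ≤ m + n) :
    rowV col m n c = rowG col m c * rowV col m n (c + 1) := by
  have h : m + n + 1 - c = (m + n - c) + 1 := by omega
  have h2 : m + n + 1 - (c+1) = m + n - c := by omega
  rw [rowV, h, List.range_succ_eq_map, List.map_cons, List.prod_cons, List.map_map, rowV, h2]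
  congr 1
  apply congrArg
  apply List.map_congr_left
  intro j hj
  simp only [Function.comp_apply]
  exact congrArg (rowG col m) (by omega)

theorem rowV_apply (col : ℕ × ℕ → Bool) (m n : ℕ) :
    ∀ d c, m + n + 1 - c = d → m + 1 ≤ c → c ≤ m + n + 1 → ∀ x,
      rowV col m n c x =
        if c ≤ x + 1 ∧ x + 1 ≤ m + n ∧ col (m, x + 1) = true then x + 1
        else slide (fun b => decide (c ≤ b) && decide (b ≤ m + n) && col (m, b)) x := by
  intro d
  induction d with
  | zero =>
    intro c hd hc1 hc2 x
    have hc : c = m + n + 1 := by omega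
    subst hc
    rw [rowV]
    simp only [Nat.sub_self, List.range_zero, List.map_nil, List.prod_nil]
    rw [if_neg (by rintro ⟨ha, hb, -⟩; omega),
      slide_eq _ x x (le_refl x)
        (and3_false _ (by by_cases hx : x ≤ m + n
                          · exact Or.inl (by omega)
                          · exact Or.inr (Or.inl hx))) (by omega)]
    rfl
  | succ d ih =>
    intro c hd hc1 hc2 x
    have hc : c ≤ m + n := by omega
    rw [rowV_succ col m n c hc]
    have hE := ih (c+1) (by omega) (by omega) (by omega) x
    set fc : ℕ → Bool := fun b => decide (c ≤ b) && decide (b ≤ m + n) && col (m, b) with hfc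
    set fc1 : ℕ → Bool := fun b => decide (c + 1 ≤ b) && decide (b ≤ m + n) && col (m, b) with hfc1
    have hfsub : ∀ y, fc1 y = true → fc y = true := by
      intro y hy
      rw [hfc1, Bool.and_eq_true, Bool.and_eq_true] at hy
      rw [hfc, Bool.and_eq_true, Bool.and_eq_true]
      simp only [decide_eq_true_eq] at *
      exact ⟨⟨by omega, hy.1.2⟩, hy.2⟩
    rw [Equiv.Perm.mul_apply]
    by_cases h1 : c + 1 ≤ x + 1 ∧ x + 1 ≤ m + n ∧ col (m, x + 1) = true
    · rw [hE, if_pos h1, if_pos ⟨by omega, h1.2⟩]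
      simp only [rowG]
      split
      · exact Equiv.swap_apply_of_ne_of_ne (by omega) (by omega)
      · rfl
    · rw [hE, if_neg h1]
      by_cases h2 : c ≤ x + 1 ∧ x + 1 ≤ m + n ∧ col (m, x + 1) = true
      · -- here x + 1 = c and col (m,c) = true
        have hx : x + 1 = c := by
          rcases h2 with ⟨h2a, h2b, h2c⟩
          by_contra hne
          exact h1 ⟨by omega, h2b, h2c⟩
        rw [if_pos h2]
        have hz : slide fc1 x = x :=
          slide_eq _ x x (le_refl x) (and3_false _ (Or.inl (by omega))) (by omega)
        rw [hz]
        simp only [rowG]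
        rw [if_pos (by rw [← hx]; exact h2.2.2)]
        have hxc : x = c - 1 := by omega
        rw [hxc, Equiv.swap_apply_left]
        omega
      · rw [if_neg h2]
        by_cases h3 : x + 1 ≤ c
        · -- x below the window
          have hz : slide fc1 x = x :=
            slide_eq _ x x (le_refl x) (and3_false _ (Or.inl (by omega))) (by omega)
          have hz' : slide fc x = x :=
            slide_eq _ x x (le_refl x) (and3_false _ (Or.inl (by omega))) (by omega)
          rw [hz, hz']
          simp only [rowG]
          split
          · rename_i hcol
            apply Equiv.swap_apply_of_ne_of_ne
            · intro hne
              apply h2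
              refine ⟨by omega, by omega, ?_⟩
              rw [show x + 1 = c from by omega]
              exact hcol
            · omega
          · rfl
        · -- x ≥ c
          push_neg at h3
          have hzle : slide fc1 x ≤ x := slide_le _ _
          have hzlb : c ≤ slide fc1 x := slide_lb fc1 c (by
            intro y hy
            rw [hfc1, Bool.and_eq_true, Bool.and_eq_true] at hy
            simp only [decide_eq_true_eq] at hy
            omega) x (by omega)
          have hstop := slide_stop fc1 x
          have hcomp : slide fc x = slide fc (slide fc1 x) := slide_comp fc fc1 hfsub x
          set z := slide fc1 x with hzdef
          rcases Nat.eq_or_lt_of_le hzlb with hzc | hzc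
          · -- z = c
            rw [hcomp, ← hzc]
            by_cases hcol : col (m, c) = true
            · have hfcz : fc c = true := by
                rw [hfc, Bool.and_eq_true, Bool.and_eq_true]
                simp only [decide_eq_true_eq]
                exact ⟨⟨le_refl _, by omega⟩, hcol⟩
              have hs1 : slide fc c = slide fc (c - 1) := by
                rw [slide, if_pos ⟨by omega, hfcz⟩]
              have hs2 : slide fc (c - 1) = c - 1 :=
                slide_eq _ (c-1) (c-1) (le_refl _) (and3_false _ (Or.inl (by omega))) (by omega)
              rw [hs1, hs2]
              simp only [rowG]
              rw [if_pos hcol, Equiv.swap_apply_right]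
            · have hs : slide fc c = c := by
                rw [slide, if_neg]
                intro hh
                rw [hfc, Bool.and_eq_true, Bool.and_eq_true] at hh
                exact hcol hh.2.2
              rw [hs]
              simp only [rowG]
              rw [if_neg hcol]
              rfl
          · -- z ≥ c + 1
            have hfcz : fc z = false := by
              cases hq : fc z
              · rfl
              · exfalso
                rw [hfc, Bool.and_eq_true, Bool.and_eq_true] at hq
                simp only [decide_eq_true_eq] at hq
                have : fc1 z = true := by
                  rw [hfc1, Bool.and_eq_true, Bool.and_eq_true]
                  simp only [decide_eq_true_eq]
                  exact ⟨⟨by omega, hq.1.2⟩, hq.2⟩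
                exact hstop ⟨by omega, this⟩
            have hs : slide fc z = z := by
              rw [slide, if_neg]
              rw [hfcz]
              simp
            rw [hcomp, hs]
            simp only [rowG]
            split
            · exact Equiv.swap_apply_of_ne_of_ne (by omega) (by omega)
            · rfl
/- ## specialized row evaluation -/

theorem rowV_apply' (col : ℕ × ℕ → Bool) (m n x : ℕ) :
    rowV col m n (m+1) x =
      if m + 1 ≤ x + 1 ∧ x + 1 ≤ m + n ∧ col (m, x + 1) = true then x + 1
      else slide (fun b => decide (m + 1 ≤ b) && decide (b ≤ m + n) && col (m, b)) x :=
  rowV_apply col m n n (m+1) (by omega) (by omega) (by omega) x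

theorem rowV_fix (col : ℕ × ℕ → Bool) (m n x : ℕ) (hx : x < m) :
    rowV col m n (m+1) x = x := by
  rw [rowV_apply', if_neg (by rintro ⟨h, -, -⟩; omega),
    slide_eq _ x x (le_refl x) (and3_false _ (Or.inl (by omega))) (by omega)]

/-- image of `Icc 1 N` under a permutation supported there -/
theorem perm_image_Icc (v : Equiv.Perm ℕ) (N : ℕ)
    (hv : ∀ x, x = 0 ∨ N < x → v x = x) :
    Finset.image (fun j => v j) (Finset.Icc 1 N) = Finset.Icc 1 N := by
  apply Finset.eq_of_subset_of_card_le
  · intro y hy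
    simp only [Finset.mem_image] at hy
    obtain ⟨j, hj, rfl⟩ := hy
    exact perm_mem_of_fix v N hv j hj
  · rw [Finset.card_image_of_injective _ v.injective]

theorem bool_false {b : Bool} (h : ¬ b = true) : b = false := by
  cases b
  · rfl
  · exact absurd rfl h

/- ## the crux lemmas : image of the complement row set under the row word -/

theorem crux_caseA (col : ℕ × ℕ → Bool) (m n t' : ℕ) (Y : ℕ → ℕ)
    (hn : 1 ≤ n)
    (hY : ∀ i, 1 ≤ i → i ≤ t' → m + 1 ≤ Y i ∧ Y i ≤ m + n)
    (hYmono : ∀ i j, 1 ≤ i → i < j → j ≤ t' → Y j < Y i)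
    (hwhite : ∀ b, m + 1 ≤ b → b ≤ m + n → col (m, b) = false →
        ∃ i, 1 ≤ i ∧ i ≤ t' ∧ b = Y i) :
    Finset.image (fun x => rowV col m n (m+1) x)
        (Finset.Icc m (m+n-1) \ Finset.image (fun i => Y i - 1) (Finset.Icc 1 t')) =
      Finset.Icc (m+1) (m+n) \ Finset.image Y (Finset.Icc 1 t') := by
  have hYinj : Set.InjOn (fun i => Y i - 1) (Finset.Icc 1 t') := by
    intro i hi j hj hij
    simp only [Finset.coe_Icc, Set.mem_Icc] at hi hj
    have hij' : Y i - 1 = Y j - 1 := hij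
    by_contra hne
    rcases Nat.lt_or_ge i j with h | h
    · have := hYmono i j hi.1 h hj.2
      have := (hY i hi.1 hi.2).1
      have := (hY j hj.1 hj.2).1
      omega
    · have hlt : j < i := by omega
      have := hYmono j i hj.1 hlt hi.2
      have := (hY i hi.1 hi.2).1
      have := (hY j hj.1 hj.2).1
      omega
  have hYinj' : Set.InjOn Y (Finset.Icc 1 t') := by
    intro i hi j hj hij
    simp only [Finset.coe_Icc, Set.mem_Icc] at hi hj
    have hij' : Y i = Y j := hij
    by_contra hne
    rcases Nat.lt_or_ge i j with h | h
    · have := hYmono i j hi.1 h hj.2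
      omega
    · have := hYmono j i hj.1 (by omega) hi.2
      omega
  have hsub : Finset.image (fun i => Y i - 1) (Finset.Icc 1 t') ⊆ Finset.Icc m (m+n-1) := by
    intro y hy
    simp only [Finset.mem_image, Finset.mem_Icc] at hy ⊢
    obtain ⟨i, hi, rfl⟩ := hy
    have := hY i hi.1 hi.2
    omega
  have hsub' : Finset.image Y (Finset.Icc 1 t') ⊆ Finset.Icc (m+1) (m+n) := by
    intro y hy
    simp only [Finset.mem_image, Finset.mem_Icc] at hy ⊢
    obtain ⟨i, hi, rfl⟩ := hy
    exact hY i hi.1 hi.2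
  apply Finset.eq_of_subset_of_card_le
  · -- forward inclusion
    intro y hy
    simp only [Finset.mem_image, Finset.mem_sdiff, Finset.mem_Icc] at hy
    obtain ⟨x, ⟨⟨hx1, hx2⟩, hxni⟩, rfl⟩ := hy
    rw [rowV_apply']
    by_cases hb : col (m, x + 1) = true
    · rw [if_pos ⟨by omega, by omega, hb⟩]
      simp only [Finset.mem_sdiff, Finset.mem_Icc, Finset.mem_image]
      refine ⟨⟨by omega, by omega⟩, ?_⟩
      rintro ⟨i, hi, hYi⟩
      have h1 := (hY i hi.1 hi.2).1
      exact hxni ⟨i, hi, by omega⟩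
    · exfalso
      have hwb := hwhite (x+1) (by omega) (by omega) (bool_false hb)
      obtain ⟨i, hi1, hi2, hbi⟩ := hwb
      exact hxni ⟨i, ⟨hi1, hi2⟩, by omega⟩
  · -- cardinalities
    rw [Finset.card_image_of_injective _ (Equiv.injective _)]
    rw [Finset.card_sdiff_of_subset hsub, Finset.card_sdiff_of_subset hsub',
      Finset.card_image_of_injOn hYinj, Finset.card_image_of_injOn hYinj']
    simp only [Nat.card_Icc]
    omega

theorem crux_caseB (col : ℕ × ℕ → Bool) (m n t' : ℕ) (Y : ℕ → ℕ)
    (hn : 1 ≤ n)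
    (hY : ∀ i, 1 ≤ i → i ≤ t' + 1 → m + 1 ≤ Y i ∧ Y i ≤ m + n)
    (hYmono : ∀ i j, 1 ≤ i → i < j → j ≤ t' + 1 → Y j < Y i)
    (hymax : col (m, Y (t'+1)) = false)
    (hwB : ∀ b, m + 1 ≤ b → b ≤ m + n → col (m, b) = false →
        (∃ i, 1 ≤ i ∧ i ≤ t' ∧ b = Y i) ∨ b ≤ Y (t'+1)) :
    Finset.image (fun x => rowV col m n (m+1) x)
        (Finset.Icc m (m+n-1) \ Finset.image (fun i => Y i - 1) (Finset.Icc 1 t')) =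
      insert m (Finset.Icc (m+1) (m+n) \ Finset.image Y (Finset.Icc 1 (t'+1))) := by
  have hYinj : Set.InjOn (fun i => Y i - 1) (Finset.Icc 1 t') := by
    intro i hi j hj hij
    simp only [Finset.coe_Icc, Set.mem_Icc] at hi hj
    have hij' : Y i - 1 = Y j - 1 := hij
    by_contra hne
    rcases Nat.lt_or_ge i j with h | h
    · have := hYmono i j hi.1 h (by omega)
      have := (hY i hi.1 (by omega)).1
      have := (hY j hj.1 (by omega)).1
      omega
    · have := hYmono j i hj.1 (by omega) (by omega)
      have := (hY i hi.1 (by omega)).1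
      have := (hY j hj.1 (by omega)).1
      omega
  have hYinj' : Set.InjOn Y (Finset.Icc 1 (t'+1)) := by
    intro i hi j hj hij
    simp only [Finset.coe_Icc, Set.mem_Icc] at hi hj
    have hij' : Y i = Y j := hij
    by_contra hne
    rcases Nat.lt_or_ge i j with h | h
    · have := hYmono i j hi.1 h hj.2
      omega
    · have := hYmono j i hj.1 (by omega) hi.2
      omega
  have hsub : Finset.image (fun i => Y i - 1) (Finset.Icc 1 t') ⊆ Finset.Icc m (m+n-1) := by
    intro y hy
    simp only [Finset.mem_image, Finset.mem_Icc] at hy ⊢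
    obtain ⟨i, hi, rfl⟩ := hy
    have := hY i hi.1 (by omega)
    omega
  have hsub' : Finset.image Y (Finset.Icc 1 (t'+1)) ⊆ Finset.Icc (m+1) (m+n) := by
    intro y hy
    simp only [Finset.mem_image, Finset.mem_Icc] at hy ⊢
    obtain ⟨i, hi, rfl⟩ := hy
    exact hY i hi.1 hi.2
  have hylt : ∀ i, 1 ≤ i → i ≤ t' → Y (t'+1) < Y i := fun i hi1 hi2 =>
    hYmono i (t'+1) hi1 (by omega) (le_refl _)
  apply Finset.eq_of_subset_of_card_le
  · intro y hy
    simp only [Finset.mem_image, Finset.mem_sdiff, Finset.mem_Icc] at hy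
    obtain ⟨x, ⟨⟨hx1, hx2⟩, hxni⟩, rfl⟩ := hy
    rw [rowV_apply']
    by_cases hb : col (m, x + 1) = true
    · rw [if_pos ⟨by omega, by omega, hb⟩]
      simp only [Finset.mem_insert, Finset.mem_sdiff, Finset.mem_Icc, Finset.mem_image]
      refine Or.inr ⟨⟨by omega, by omega⟩, ?_⟩
      rintro ⟨i, hi, hYi⟩
      by_cases hit : i ≤ t'
      · have h1 := (hY i hi.1 (by omega)).1
        exact hxni ⟨i, ⟨hi.1, hit⟩, by omega⟩
      · -- i = t'+1 : but Y (t'+1) is white and x+1 is black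
        have : i = t' + 1 := by omega
        subst this
        rw [hYi] at hymax
        rw [hymax] at hb
        exact Bool.false_ne_true hb
    · have hcolf : col (m, x + 1) = false := bool_false hb
      have hwb := hwB (x+1) (by omega) (by omega) hcolf
      have hble : x + 1 ≤ Y (t'+1) := by
        rcases hwb with ⟨i, hi1, hi2, hbi⟩ | h
        · exfalso
          have h1 := (hY i hi1 (by omega)).1
          exact hxni ⟨i, ⟨hi1, hi2⟩, by omega⟩
        · exact h
      rw [if_neg (by rintro ⟨-, -, hcol⟩; exact hb hcol)]
      have hzle : slide (fun b => decide (m + 1 ≤ b) && decide (b ≤ m + n) && col (m, b)) x ≤ x :=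
        slide_le _ _
      have hzlb : m ≤ slide (fun b => decide (m + 1 ≤ b) && decide (b ≤ m + n) && col (m, b)) x := by
        apply slide_lb _ m _ x (by omega)
        intro y hy
        simp only [Bool.and_eq_true, decide_eq_true_eq] at hy
        omega
      have hstop := slide_stop (fun b => decide (m + 1 ≤ b) && decide (b ≤ m + n) && col (m, b)) x
      have hcolz : col (m, slide (fun b => decide (m + 1 ≤ b) && decide (b ≤ m + n) && col (m, b)) x) = false ∨
          slide (fun b => decide (m + 1 ≤ b) && decide (b ≤ m + n) && col (m, b)) x = m := by
        rcases Nat.eq_or_lt_of_le hzlb with h | h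
        · exact Or.inr h.symm
        · left
          cases hq : col (m, slide (fun b => decide (m + 1 ≤ b) && decide (b ≤ m + n) && col (m, b)) x)
          · rfl
          · exfalso
            apply hstop
            refine ⟨by omega, ?_⟩
            simp only [Bool.and_eq_true, decide_eq_true_eq]
            exact ⟨⟨by omega, by omega⟩, hq⟩
      set z := slide (fun b => decide (m + 1 ≤ b) && decide (b ≤ m + n) && col (m, b)) x with hzdef
      simp only [Finset.mem_insert, Finset.mem_sdiff, Finset.mem_Icc, Finset.mem_image]
      rcases Nat.eq_or_lt_of_le hzlb with hzm | hzm
      · exact Or.inl hzm.symm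
      · refine Or.inr ⟨⟨by omega, by omega⟩, ?_⟩
        rintro ⟨i, ⟨hi1, hi2⟩, hYi⟩
        -- z ≤ x < x+1 ≤ Y (t'+1) < Y i for i ≤ t'
        by_cases hit : i ≤ t'
        · have := hylt i hi1 hit
          omega
        · have hieq : i = t' + 1 := by omega
          subst hieq
          omega
  · have hgap : ∀ j, 1 ≤ j → j ≤ t' + 1 → Y j + j ≤ Y 1 + 1 := by
      intro j
      induction j with
      | zero => intro h1 _; exact absurd h1 (by omega)
      | succ j ihj =>
        intro h1 h2
        by_cases hj0 : j = 0
        · subst hj0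
          norm_num
        · have hj1 : 1 ≤ j := by omega
          have := ihj hj1 (by omega)
          have := hYmono j (j+1) hj1 (by omega) h2
          omega
    have htn : t' + 1 ≤ n := by
      have := hgap (t'+1) (by omega) (le_refl _)
      have h1 := (hY 1 (le_refl _) (by omega)).2
      have h2 := (hY (t'+1) (by omega) (le_refl _)).1
      omega
    rw [Finset.card_image_of_injective _ (Equiv.injective _)]
    rw [Finset.card_sdiff_of_subset hsub]
    rw [Finset.card_insert_of_notMem (by
      simp only [Finset.mem_sdiff, Finset.mem_Icc]
      rintro ⟨⟨h, -⟩, -⟩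
      omega)]
    rw [Finset.card_sdiff_of_subset hsub',
      Finset.card_image_of_injOn hYinj, Finset.card_image_of_injOn hYinj']
    simp only [Nat.card_Icc]
    omega

theorem image_fixed (f : ℕ → ℕ) (s : Finset ℕ) (h : ∀ x ∈ s, f x = x) : s.image f = s := by
  ext y
  simp only [Finset.mem_image]
  constructor
  · rintro ⟨x, hx, rfl⟩
    rw [h x hx]
    exact hx
  · intro hy
    exact ⟨y, hy, h y hy⟩
theorem inGrid_iff (m n a b : ℕ) :
    InGrid m n (a, b) ↔ (1 ≤ a ∧ a ≤ m ∧ m + 1 ≤ b ∧ b ≤ m + n) := Iff.rfl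

theorem main_aux : ∀ m n : ℕ, 2 ≤ m → 2 ≤ n → ∀ col : ℕ × ℕ → Bool, IsCauchon m n col →
    ∀ k, n + 1 ≤ k → k ≤ m + n - 1 → ∀ t (X Y : ℕ → ℕ),
    IsChainRootedAt m n col (k - n + 1) (m + n) t X Y →
    (Finset.Icc 1 m \ Finset.image X (Finset.Icc 1 t)) ∪ Finset.image Y (Finset.Icc 1 t) =
      (Finset.Icc 1 (m + n) \
        Finset.image (fun j => readingWord m n col j) (Finset.Icc 1 k)) ∪
        Finset.Icc 1 (k - n) := by
  intro m
  induction m using Nat.strong_induction_on with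
  | _ m IH =>
  intro n hm hn col hC k hk1 hkn t X Y hchain
  obtain ⟨hA1, hA2, hA3, hA4, hA5, hA6⟩ := hchain
  -- basic chain facts
  have hXm : ∀ i, 1 ≤ i → i ≤ t →
      1 ≤ X i ∧ X i ≤ m ∧ m + 1 ≤ Y i ∧ Y i ≤ m + n ∧ col (X i, Y i) = false := by
    intro i h1 h2
    obtain ⟨hg, hw⟩ := hA1 i h1 h2
    rw [inGrid_iff] at hg
    exact ⟨hg.1, hg.2.1, hg.2.2.1, hg.2.2.2, hw⟩
  have hmono : ∀ j i, 1 ≤ i → i < j → j ≤ t → X i < X j ∧ Y j < Y i := by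
    intro j
    induction j with
    | zero => intro i _ h _; omega
    | succ j ihj =>
      intro i hi hij hj
      have hstep := hA5 j (by omega) (by omega)
      by_cases hij' : i = j
      · subst hij'
        exact ⟨hstep.1, hstep.2.1⟩
      · have := ihj i hi (by omega) (by omega)
        exact ⟨lt_trans this.1 hstep.1, lt_trans hstep.2.1 this.2⟩
  have hX1lb : 1 ≤ t → k - n + 1 ≤ X 1 := by
    intro ht
    cases hcb : col (k - n + 1, m + n)
    · have := (hA2 hcb).2.1
      omega
    · exact (hA3 hcb ht).1
  have hXlb : ∀ i, 1 ≤ i → i ≤ t → k - n + 1 ≤ X i := by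
    intro i h1 h2
    rcases Nat.eq_or_lt_of_le h1 with h | h
    · rw [← h]; exact hX1lb (by omega)
    · have := (hmono i 1 (le_refl _) (by omega) h2).1
      have := hX1lb (by omega)
      omega
  -- the key comparison: a white square in the top row not among the chain columns
  -- lies weakly left of every chain column
  have key : ∀ b, m + 1 ≤ b → b ≤ m + n → col (m, b) = false →
      ∀ j, 1 ≤ j → j ≤ t → (∀ i, 1 ≤ i → i < j → b ≠ Y i) → b ≤ Y j := by
    intro b hb1 hb2 hbw j
    induction j with
    | zero => intro h _ _; exact absurd h (by omega)
    | succ j ihj =>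
      intro h1 h2 hne
      have hkm : k - n + 1 ≤ m := by omega
      by_cases hj0 : j = 0
      · subst hj0
        have hb1' : b ≤ Y 1 := by
          cases hcb : col (k - n + 1, m + n)
          · have := (hA2 hcb).2.2
            omega
          · exact ((hA3 hcb (by omega)).2.2 m b
              ((inGrid_iff m n m b).mpr ⟨by omega, le_refl _, hb1, hb2⟩) hbw hkm hb2).2
        simpa using hb1'
      · have hble : b ≤ Y j := ihj (by omega) (by omega) (fun i hi hij => hne i hi (by omega))
        have hbne : b ≠ Y j := hne j (by omega) (by omega)
        have hstep := hA5 j (by omega) (by omega)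
        have hXjm : X j < m := by
          have h' := (hmono t j (by omega) (by omega) (le_refl _)).1
          have := (hXm t (by omega) (le_refl _)).2.1
          omega
        exact (hstep.2.2 m b ((inGrid_iff m n m b).mpr ⟨by omega, le_refl _, hb1, hb2⟩)
          hbw (by omega) (by omega)).2
  by_cases hedge : k = m + n - 1
  · -- edge case : k = m+n-1, box is (m, m+n)
    subst hedge
    have hkn' : m + n - 1 - n = m - 1 := by omega
    have ht1 : t ≤ 1 := by
      by_contra h
      have hmono12 := (hmono 2 1 (le_refl _) (by omega) (by omega)).1
      have := hXlb 1 (by omega) (by omega)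
      have := (hXm 2 (by omega) (by omega)).2.1
      omega
    have hsplit := readingWord_split m n col (by omega)
    have hvtop : readingWord m n col (m + n) =
        slide (fun b => decide (m + 1 ≤ b) && decide (b ≤ m + n) && col (m, b)) (m + n) := by
      rw [hsplit]
      simp only [Equiv.Perm.mul_apply]
      rw [readingWord_apply_of_out (m-1) n _ (m+n) (Or.inr (by omega))]
      rw [rowV_apply', if_neg (by rintro ⟨-, h, -⟩; omega)]
    have himg : Finset.image (fun j => readingWord m n col j) (Finset.Icc 1 (m + n - 1)) =
        Finset.Icc 1 (m + n) \ {readingWord m n col (m + n)} := by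
      have hicc : Finset.Icc 1 (m + n - 1) = Finset.Icc 1 (m + n) \ {m + n} := by
        ext x
        simp only [Finset.mem_Icc, Finset.mem_sdiff, Finset.mem_singleton]
        omega
      rw [hicc, Finset.image_sdiff _ _ (Equiv.injective _),
        perm_image_Icc _ _ (fun x hx => readingWord_apply_of_out m n col x hx),
        Finset.image_singleton]
    rw [himg]
    interval_cases t
    · -- t = 0 : whole region black
      have hallb : ∀ b, m + 1 ≤ b → b ≤ m + n → col (m, b) = true := by
        intro b h1 h2
        cases hq : col (m, b)
        · exact absurd (hA4 rfl m b ((inGrid_iff m n m b).mpr ⟨by omega, le_refl _, h1, h2⟩)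
            hq (by omega) h2) (by simp)
        · rfl
      have hvval : readingWord m n col (m + n) = m := by
        rw [hvtop]
        apply slide_eq _ m (m+n) (by omega) (and3_false _ (Or.inl (by omega)))
        intro y hy1 hy2
        simp only [Bool.and_eq_true, decide_eq_true_eq]
        exact ⟨⟨by omega, by omega⟩, hallb y (by omega) hy2⟩
      rw [hvval]
      have hicc0 : Finset.Icc 1 0 = (∅ : Finset ℕ) := by simp
      rw [hicc0, Finset.image_empty, Finset.image_empty]
      ext x
      simp only [Finset.mem_union, Finset.mem_sdiff, Finset.mem_Icc, Finset.mem_singleton,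
        Finset.sdiff_empty, Finset.union_empty, Finset.notMem_empty]
      omega
    · -- t = 1 : chain is the single square (m, Y 1)
      have hX1 : X 1 = m := by
        have := hXlb 1 (le_refl _) (le_refl _)
        have := (hXm 1 (le_refl _) (le_refl _)).2.1
        omega
      have h1facts := hXm 1 (le_refl _) (le_refl _)
      have hw1 : col (m, Y 1) = false := by
        rw [← hX1]
        exact h1facts.2.2.2.2
      have hYb : ∀ b, Y 1 < b → b ≤ m + n → col (m, b) = true := by
        intro b hb1 hb2
        cases hq : col (m, b)
        · exfalso
          have := key b (by omega) hb2 hq 1 (le_refl _) (le_refl _)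
            (fun i hi hilt => absurd hilt (by omega))
          omega
        · rfl
      have hvval : readingWord m n col (m + n) = Y 1 := by
        rw [hvtop]
        apply slide_eq _ (Y 1) (m+n) (by omega) (and3_false _ (Or.inr (Or.inr hw1)))
        intro y hy1 hy2
        simp only [Bool.and_eq_true, decide_eq_true_eq]
        exact ⟨⟨by omega, by omega⟩, hYb y hy1 hy2⟩
      rw [hvval, Finset.Icc_self, Finset.image_singleton, Finset.image_singleton, hX1]
      ext x
      simp only [Finset.mem_union, Finset.mem_sdiff, Finset.mem_Icc, Finset.mem_singleton]
      omega
  · -- recursive case : k ≤ m + n - 2, split off the top row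
    have hm3 : 3 ≤ m := by omega
    have hr2 : k - n + 1 ≤ m - 1 := by omega
    have hC' : IsCauchon (m-1) n (fun p => col (p.1, p.2 + 1)) := by
      intro a b hg hb
      rw [inGrid_iff] at hg
      have hg' : InGrid m n (a, b + 1) :=
        (inGrid_iff m n a (b+1)).mpr ⟨hg.1, by omega, by omega, by omega⟩
      rcases hC a (b+1) hg' hb with h | h
      · left
        intro b' hb1 hb2
        exact h (b'+1) (by omega) (by omega)
      · right
        intro a' h1 h2
        exact h a' h1 (by omega)
    have hsplit := readingWord_split m n col (by omega)
    have hveq : ∀ j, readingWord m n col j =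
        rowV col m n (m+1) (readingWord (m-1) n (fun p => col (p.1, p.2 + 1)) j) := by
      intro j
      rw [hsplit]
      rfl
    have hSrange : ∀ x ∈ Finset.image
        (fun j => readingWord (m-1) n (fun p => col (p.1, p.2+1)) j) (Finset.Icc 1 k),
        1 ≤ x ∧ x ≤ m + n - 1 := by
      intro x hx
      simp only [Finset.mem_image] at hx
      obtain ⟨j, hj, rfl⟩ := hx
      simp only [Finset.mem_Icc] at hj
      have hj' : j ∈ Finset.Icc 1 (m+n-1) := by
        simp only [Finset.mem_Icc]; omega
      have := perm_mem_of_fix (readingWord (m-1) n (fun p => col (p.1, p.2+1))) (m+n-1)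
        (fun x hx => readingWord_apply_of_out (m-1) n (fun p => col (p.1, p.2+1)) x (by omega)) j hj'
      simpa [Finset.mem_Icc] using this
    by_cases hmem : 1 ≤ t ∧ X t = m
    · -- the chain has a member in the top row
      obtain ⟨ht1, hXt⟩ := hmem
      obtain ⟨t0, rfl⟩ : ∃ t0, t = t0 + 1 := ⟨t - 1, by omega⟩
      have hXlt : ∀ i, 1 ≤ i → i ≤ t0 → X i < m := by
        intro i h1 h2
        have := (hmono (t0+1) i h1 (by omega) (le_refl _)).1
        omega
      have chain' : IsChainRootedAt (m-1) n (fun p => col (p.1, p.2+1)) (k-n+1) (m-1+n)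
          t0 X (fun i => Y i - 1) := by
        refine ⟨?_, ?_, ?_, ?_, ?_, ?_⟩
        · intro i h1 h2
          have h := hXm i h1 (by omega)
          have hxl := hXlt i h1 h2
          refine ⟨(inGrid_iff (m-1) n (X i) (Y i - 1)).mpr ⟨h.1, by omega, by omega, by omega⟩, ?_⟩
          show col (X i, Y i - 1 + 1) = false
          rw [show Y i - 1 + 1 = Y i from by omega]
          exact h.2.2.2.2
        · intro hw
          have hw0 : col (k - n + 1, m - 1 + n + 1) = false := hw
          rw [show m - 1 + n + 1 = m + n from by omega] at hw0
          have h2 := hA2 hw0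
          have ht0' : 1 ≤ t0 := by
            by_contra h0
            have hx1 : X 1 = m := by
              rw [show (1:ℕ) = t0 + 1 from by omega]
              exact hXt
            have h21 := h2.2.1
            omega
          have h22 := h2.2.2
          exact ⟨ht0', h2.2.1, show Y 1 - 1 = m - 1 + n by omega⟩
        · intro hb ht0'
          have hb0 : col (k - n + 1, m - 1 + n + 1) = true := hb
          rw [show m - 1 + n + 1 = m + n from by omega] at hb0
          have h3 := hA3 hb0 (by omega)
          have hy1 := (hXm 1 (by omega) (by omega)).2.2.2.1
          refine ⟨h3.1, show Y 1 - 1 ≤ m - 1 + n by omega, ?_⟩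
          intro a b hg hwb ha hb2
          rw [inGrid_iff] at hg
          have := h3.2.2 a (b+1)
            ((inGrid_iff m n a (b+1)).mpr ⟨hg.1, by omega, by omega, by omega⟩) hwb ha (by omega)
          exact ⟨this.1, show b ≤ Y 1 - 1 by omega⟩
        · intro ht0' a b hg hwb ha hb2
          rw [inGrid_iff] at hg
          have hx1 : X 1 = m := by
            rw [show (1:ℕ) = t0 + 1 from by omega]
            exact hXt
          cases hcb : col (k - n + 1, m + n)
          · have := (hA2 hcb).2.1
            omega
          · have h3 := hA3 hcb (by omega)
            have := (h3.2.2 a (b+1)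
              ((inGrid_iff m n a (b+1)).mpr ⟨hg.1, by omega, by omega, by omega⟩) hwb ha (by omega)).1
            omega
        · intro i h1 h2
          have h5 := hA5 i h1 (by omega)
          have hy1 := (hXm (i+1) (by omega) (by omega)).2.2.1
          have hy0 := (hXm i (by omega) (by omega)).2.2.1
          refine ⟨h5.1, show Y (i+1) - 1 < Y i - 1 by
            have := h5.2.1; omega, ?_⟩
          intro a b hg hwb ha hb2
          have hb2' : b < Y i - 1 := hb2
          rw [inGrid_iff] at hg
          have := h5.2.2 a (b+1)
            ((inGrid_iff m n a (b+1)).mpr ⟨hg.1, by omega, by omega, by omega⟩) hwb ha (by omega)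
          exact ⟨this.1, show b ≤ Y (i+1) - 1 by have := this.2; have := (hXm (i+1) (by omega) (by omega)).2.2.1; omega⟩
        · intro ht0' a b hg hwb ha hb2
          have hb2' : b < Y t0 - 1 := hb2
          rw [inGrid_iff] at hg
          have h5 := hA5 t0 (by omega) (by omega)
          have hy0 := (hXm t0 (by omega) (by omega)).2.2.1
          have := (h5.2.2 a (b+1)
            ((inGrid_iff m n a (b+1)).mpr ⟨hg.1, by omega, by omega, by omega⟩) hwb ha (by omega)).1
          omega
      have IHeq := IH (m-1) (by omega) n (by omega) hn _ hC' k hk1 (by omega)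
        t0 X (fun i => Y i - 1) chain'
      have hYfull : ∀ i, 1 ≤ i → i ≤ t0 + 1 → m + 1 ≤ Y i ∧ Y i ≤ m + n := fun i h1 h2 =>
        ⟨(hXm i h1 h2).2.2.1, (hXm i h1 h2).2.2.2.1⟩
      have hYmono' : ∀ i j, 1 ≤ i → i < j → j ≤ t0 + 1 → Y j < Y i := fun i j h1 h2 h3 =>
        (hmono j i h1 h2 h3).2
      have hymax : col (m, Y (t0 + 1)) = false := by
        rw [← hXt]
        exact (hXm (t0+1) (by omega) (le_refl _)).2.2.2.2
      have hwB : ∀ b, m + 1 ≤ b → b ≤ m + n → col (m, b) = false →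
          (∃ i, 1 ≤ i ∧ i ≤ t0 ∧ b = Y i) ∨ b ≤ Y (t0 + 1) := by
        intro b h1 h2 hw
        by_cases hex : ∃ i, 1 ≤ i ∧ i ≤ t0 ∧ b = Y i
        · exact Or.inl hex
        · push_neg at hex
          exact Or.inr (key b h1 h2 hw (t0+1) (by omega) (le_refl _)
            (fun i hi hilt => hex i hi (by omega)))
      have hcrux := crux_caseB col m n t0 Y (by omega) hYfull hYmono' hymax hwB
      have hXr : ∀ x ∈ Finset.image X (Finset.Icc 1 t0), k - n + 1 ≤ x ∧ x ≤ m - 1 := by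
        intro x hx
        simp only [Finset.mem_image, Finset.mem_Icc] at hx
        obtain ⟨i, hi, rfl⟩ := hx
        have := hXlt i hi.1 hi.2
        exact ⟨hXlb i hi.1 (by omega), by omega⟩
      have hYr : ∀ x ∈ Finset.image (fun i => Y i - 1) (Finset.Icc 1 t0),
          m ≤ x ∧ x ≤ m + n - 1 := by
        intro x hx
        simp only [Finset.mem_image, Finset.mem_Icc] at hx
        obtain ⟨i, hi, rfl⟩ := hx
        have := hYfull i hi.1 (by omega)
        omega
      have hYr2 : ∀ x ∈ Finset.image Y (Finset.Icc 1 (t0+1)), m + 1 ≤ x ∧ x ≤ m + n := by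
        intro x hx
        simp only [Finset.mem_image, Finset.mem_Icc] at hx
        obtain ⟨i, hi, rfl⟩ := hx
        exact hYfull i hi.1 hi.2
      have hS : Finset.image (fun j => readingWord (m-1) n (fun p => col (p.1, p.2+1)) j)
            (Finset.Icc 1 k)
          = (Finset.image (fun j => readingWord (m-1) n (fun p => col (p.1, p.2+1)) j)
              (Finset.Icc 1 k)).filter (fun x => x ≤ k - n)
            ∪ (Finset.image X (Finset.Icc 1 t0)
            ∪ (Finset.Icc m (m+n-1) \ Finset.image (fun i => Y i - 1) (Finset.Icc 1 t0))) := by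
        ext x
        have h1 := Finset.ext_iff.mp IHeq x
        simp only [Finset.mem_union, Finset.mem_sdiff, Finset.mem_Icc, Finset.mem_filter]
          at h1 ⊢
        by_cases ha1 : x ∈ Finset.image
            (fun j => readingWord (m-1) n (fun p => col (p.1, p.2+1)) j) (Finset.Icc 1 k)
          <;> by_cases ha2 : x ∈ Finset.image X (Finset.Icc 1 t0)
          <;> by_cases ha3 : x ∈ Finset.image (fun i => Y i - 1) (Finset.Icc 1 t0)
          <;> first
            | (have hx1 := hSrange x ha1
               first
                 | (have hx2 := hXr x ha2
                    first | (have hx3 := hYr x ha3) | skip)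
                 | (first | (have hx3 := hYr x ha3) | skip))
            | (first
                 | (have hx2 := hXr x ha2
                    first | (have hx3 := hYr x ha3) | skip)
                 | (first | (have hx3 := hYr x ha3) | skip))
        all_goals simp only [ha1, ha2, ha3, iff_true, iff_false, not_true, not_false_iff,
          true_and, and_true, false_and, and_false, true_or, or_true, false_or, or_false,
          true_iff, false_iff, not_and, not_or] at h1 ⊢
        all_goals omega
      have hfix1 : Finset.image (fun x => rowV col m n (m+1) x)
          ((Finset.image (fun j => readingWord (m-1) n (fun p => col (p.1, p.2+1)) j)
            (Finset.Icc 1 k)).filter (fun x => x ≤ k - n)) =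
          (Finset.image (fun j => readingWord (m-1) n (fun p => col (p.1, p.2+1)) j)
            (Finset.Icc 1 k)).filter (fun x => x ≤ k - n) := by
        apply image_fixed
        intro x hx
        have := Finset.mem_filter.mp hx
        exact rowV_fix col m n x (by omega)
      have hfix2 : Finset.image (fun x => rowV col m n (m+1) x)
          (Finset.image X (Finset.Icc 1 t0)) = Finset.image X (Finset.Icc 1 t0) := by
        apply image_fixed
        intro x hx
        have := hXr x hx
        exact rowV_fix col m n x (by omega)
      have himgS : Finset.image (fun j => readingWord m n col j) (Finset.Icc 1 k) =
          (Finset.image (fun j => readingWord (m-1) n (fun p => col (p.1, p.2+1)) j)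
            (Finset.Icc 1 k)).filter (fun x => x ≤ k - n)
          ∪ (Finset.image X (Finset.Icc 1 t0)
          ∪ insert m (Finset.Icc (m+1) (m+n) \ Finset.image Y (Finset.Icc 1 (t0+1)))) := by
        have h0 : Finset.image (fun j => readingWord m n col j) (Finset.Icc 1 k) =
            Finset.image (fun x => rowV col m n (m+1) x)
              (Finset.image (fun j => readingWord (m-1) n (fun p => col (p.1, p.2+1)) j)
                (Finset.Icc 1 k)) := by
          rw [Finset.image_image]
          exact Finset.image_congr (fun j _ => hveq j)
        rw [h0]
        conv_lhs => rw [hS]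
        rw [Finset.image_union, Finset.image_union, hfix1, hfix2, hcrux]
      rw [himgS]
      have hXfull : Finset.image X (Finset.Icc 1 (t0+1)) =
          insert m (Finset.image X (Finset.Icc 1 t0)) := by
        have hins : Finset.Icc 1 (t0+1) = insert (t0+1) (Finset.Icc 1 t0) := by
          ext i
          simp only [Finset.mem_Icc, Finset.mem_insert]
          omega
        rw [hins, Finset.image_insert, hXt]
      rw [hXfull]
      ext x
      simp only [Finset.mem_union, Finset.mem_sdiff, Finset.mem_Icc, Finset.mem_insert,
        Finset.mem_filter]
      by_cases ha1 : x ∈ Finset.image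
          (fun j => readingWord (m-1) n (fun p => col (p.1, p.2+1)) j) (Finset.Icc 1 k)
        <;> by_cases ha2 : x ∈ Finset.image X (Finset.Icc 1 t0)
        <;> by_cases ha3 : x ∈ Finset.image Y (Finset.Icc 1 (t0+1))
        <;> first
          | (have hx1 := hSrange x ha1
             first
               | (have hx2 := hXr x ha2
                  first | (have hx3 := hYr2 x ha3) | skip)
               | (first | (have hx3 := hYr2 x ha3) | skip))
          | (first
               | (have hx2 := hXr x ha2
                  first | (have hx3 := hYr2 x ha3) | skip)
               | (first | (have hx3 := hYr2 x ha3) | skip))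
      all_goals simp only [ha1, ha2, ha3, iff_true, iff_false, not_true, not_false_iff,
        true_and, and_true, false_and, and_false, true_or, or_true, false_or, or_false,
        true_iff, false_iff, not_and, not_or]
      all_goals omega
    · -- no chain member in the top row
      have hXlt : ∀ i, 1 ≤ i → i ≤ t → X i < m := by
        intro i h1 h2
        have hXtm : X t < m := by
          have h := (hXm t (by omega) (le_refl _)).2.1
          rcases Nat.eq_or_lt_of_le h with h' | h'
          · exact absurd ⟨by omega, h'⟩ hmem
          · exact h'
        rcases Nat.eq_or_lt_of_le h2 with h' | h'
        · rw [h']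
          exact hXtm
        · have := (hmono t i h1 h' (le_refl _)).1
          omega
      have chain' : IsChainRootedAt (m-1) n (fun p => col (p.1, p.2+1)) (k-n+1) (m-1+n)
          t X (fun i => Y i - 1) := by
        refine ⟨?_, ?_, ?_, ?_, ?_, ?_⟩
        · intro i h1 h2
          have h := hXm i h1 h2
          have hxl := hXlt i h1 h2
          refine ⟨(inGrid_iff (m-1) n (X i) (Y i - 1)).mpr ⟨h.1, by omega, by omega, by omega⟩, ?_⟩
          show col (X i, Y i - 1 + 1) = false
          rw [show Y i - 1 + 1 = Y i from by omega]
          exact h.2.2.2.2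
        · intro hw
          have hw0 : col (k - n + 1, m - 1 + n + 1) = false := hw
          rw [show m - 1 + n + 1 = m + n from by omega] at hw0
          have h2 := hA2 hw0
          have h22 := h2.2.2
          exact ⟨h2.1, h2.2.1, show Y 1 - 1 = m - 1 + n by omega⟩
        · intro hb ht'
          have hb0 : col (k - n + 1, m - 1 + n + 1) = true := hb
          rw [show m - 1 + n + 1 = m + n from by omega] at hb0
          have h3 := hA3 hb0 ht'
          have hy1 := (hXm 1 (by omega) ht').2.2.2.1
          refine ⟨h3.1, show Y 1 - 1 ≤ m - 1 + n by omega, ?_⟩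
          intro a b hg hwb ha hb2
          rw [inGrid_iff] at hg
          have := h3.2.2 a (b+1)
            ((inGrid_iff m n a (b+1)).mpr ⟨hg.1, by omega, by omega, by omega⟩) hwb ha (by omega)
          exact ⟨this.1, show b ≤ Y 1 - 1 by omega⟩
        · intro ht0 a b hg hwb ha hb2
          rw [inGrid_iff] at hg
          exact hA4 ht0 a (b+1)
            ((inGrid_iff m n a (b+1)).mpr ⟨hg.1, by omega, by omega, by omega⟩) hwb ha (by omega)
        · intro i h1 h2
          have h5 := hA5 i h1 h2
          have hy1 := (hXm (i+1) (by omega) (by omega)).2.2.1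
          have hy0 := (hXm i (by omega) (by omega)).2.2.1
          refine ⟨h5.1, show Y (i+1) - 1 < Y i - 1 by
            have := h5.2.1; omega, ?_⟩
          intro a b hg hwb ha hb2
          have hb2' : b < Y i - 1 := hb2
          rw [inGrid_iff] at hg
          have := h5.2.2 a (b+1)
            ((inGrid_iff m n a (b+1)).mpr ⟨hg.1, by omega, by omega, by omega⟩) hwb ha (by omega)
          exact ⟨this.1, show b ≤ Y (i+1) - 1 by
            have := this.2; have := (hXm (i+1) (by omega) (by omega)).2.2.1; omega⟩
        · intro ht' a b hg hwb ha hb2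
          have hb2' : b < Y t - 1 := hb2
          rw [inGrid_iff] at hg
          have hy0 := (hXm t ht' (le_refl _)).2.2.1
          exact hA6 ht' a (b+1)
            ((inGrid_iff m n a (b+1)).mpr ⟨hg.1, by omega, by omega, by omega⟩) hwb ha (by omega)
      have IHeq := IH (m-1) (by omega) n (by omega) hn _ hC' k hk1 (by omega)
        t X (fun i => Y i - 1) chain'
      have hYfull : ∀ i, 1 ≤ i → i ≤ t → m + 1 ≤ Y i ∧ Y i ≤ m + n := fun i h1 h2 =>
        ⟨(hXm i h1 h2).2.2.1, (hXm i h1 h2).2.2.2.1⟩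
      have hYmono' : ∀ i j, 1 ≤ i → i < j → j ≤ t → Y j < Y i := fun i j h1 h2 h3 =>
        (hmono j i h1 h2 h3).2
      have hwhiteA : ∀ b, m + 1 ≤ b → b ≤ m + n → col (m, b) = false →
          ∃ i, 1 ≤ i ∧ i ≤ t ∧ b = Y i := by
        intro b h1 h2 hw
        by_cases ht0 : t = 0
        · exact (hA4 ht0 m b ((inGrid_iff m n m b).mpr ⟨by omega, le_refl _, h1, h2⟩)
            hw (by omega) h2).elim
        · by_contra hex
          push_neg at hex
          have hble := key b h1 h2 hw t (by omega) (le_refl _)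
            (fun i hi hilt => hex i hi (by omega))
          have hbne : b ≠ Y t := hex t (by omega) (le_refl _)
          have hXtm : X t < m := hXlt t (by omega) (le_refl _)
          exact hA6 (by omega) m b ((inGrid_iff m n m b).mpr ⟨by omega, le_refl _, h1, h2⟩)
            hw (by omega) (by omega)
      have hcrux := crux_caseA col m n t Y (by omega) hYfull hYmono' hwhiteA
      have hXr : ∀ x ∈ Finset.image X (Finset.Icc 1 t), k - n + 1 ≤ x ∧ x ≤ m - 1 := by
        intro x hx
        simp only [Finset.mem_image, Finset.mem_Icc] at hx
        obtain ⟨i, hi, rfl⟩ := hx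
        have := hXlt i hi.1 hi.2
        exact ⟨hXlb i hi.1 hi.2, by omega⟩
      have hYr : ∀ x ∈ Finset.image (fun i => Y i - 1) (Finset.Icc 1 t),
          m ≤ x ∧ x ≤ m + n - 1 := by
        intro x hx
        simp only [Finset.mem_image, Finset.mem_Icc] at hx
        obtain ⟨i, hi, rfl⟩ := hx
        have := hYfull i hi.1 hi.2
        omega
      have hYr2 : ∀ x ∈ Finset.image Y (Finset.Icc 1 t), m + 1 ≤ x ∧ x ≤ m + n := by
        intro x hx
        simp only [Finset.mem_image, Finset.mem_Icc] at hx
        obtain ⟨i, hi, rfl⟩ := hx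
        exact hYfull i hi.1 hi.2
      have hS : Finset.image (fun j => readingWord (m-1) n (fun p => col (p.1, p.2+1)) j)
            (Finset.Icc 1 k)
          = (Finset.image (fun j => readingWord (m-1) n (fun p => col (p.1, p.2+1)) j)
              (Finset.Icc 1 k)).filter (fun x => x ≤ k - n)
            ∪ (Finset.image X (Finset.Icc 1 t)
            ∪ (Finset.Icc m (m+n-1) \ Finset.image (fun i => Y i - 1) (Finset.Icc 1 t))) := by
        ext x
        have h1 := Finset.ext_iff.mp IHeq x
        simp only [Finset.mem_union, Finset.mem_sdiff, Finset.mem_Icc, Finset.mem_filter]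
          at h1 ⊢
        by_cases ha1 : x ∈ Finset.image
            (fun j => readingWord (m-1) n (fun p => col (p.1, p.2+1)) j) (Finset.Icc 1 k)
          <;> by_cases ha2 : x ∈ Finset.image X (Finset.Icc 1 t)
          <;> by_cases ha3 : x ∈ Finset.image (fun i => Y i - 1) (Finset.Icc 1 t)
          <;> first
            | (have hx1 := hSrange x ha1
               first
                 | (have hx2 := hXr x ha2
                    first | (have hx3 := hYr x ha3) | skip)
                 | (first | (have hx3 := hYr x ha3) | skip))
            | (first
                 | (have hx2 := hXr x ha2
                    first | (have hx3 := hYr x ha3) | skip)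
                 | (first | (have hx3 := hYr x ha3) | skip))
        all_goals simp only [ha1, ha2, ha3, iff_true, iff_false, not_true, not_false_iff,
          true_and, and_true, false_and, and_false, true_or, or_true, false_or, or_false,
          true_iff, false_iff, not_and, not_or] at h1 ⊢
        all_goals omega
      have hfix1 : Finset.image (fun x => rowV col m n (m+1) x)
          ((Finset.image (fun j => readingWord (m-1) n (fun p => col (p.1, p.2+1)) j)
            (Finset.Icc 1 k)).filter (fun x => x ≤ k - n)) =
          (Finset.image (fun j => readingWord (m-1) n (fun p => col (p.1, p.2+1)) j)
            (Finset.Icc 1 k)).filter (fun x => x ≤ k - n) := by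
        apply image_fixed
        intro x hx
        have := Finset.mem_filter.mp hx
        exact rowV_fix col m n x (by omega)
      have hfix2 : Finset.image (fun x => rowV col m n (m+1) x)
          (Finset.image X (Finset.Icc 1 t)) = Finset.image X (Finset.Icc 1 t) := by
        apply image_fixed
        intro x hx
        have := hXr x hx
        exact rowV_fix col m n x (by omega)
      have himgS : Finset.image (fun j => readingWord m n col j) (Finset.Icc 1 k) =
          (Finset.image (fun j => readingWord (m-1) n (fun p => col (p.1, p.2+1)) j)
            (Finset.Icc 1 k)).filter (fun x => x ≤ k - n)
          ∪ (Finset.image X (Finset.Icc 1 t)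
          ∪ (Finset.Icc (m+1) (m+n) \ Finset.image Y (Finset.Icc 1 t))) := by
        have h0 : Finset.image (fun j => readingWord m n col j) (Finset.Icc 1 k) =
            Finset.image (fun x => rowV col m n (m+1) x)
              (Finset.image (fun j => readingWord (m-1) n (fun p => col (p.1, p.2+1)) j)
                (Finset.Icc 1 k)) := by
          rw [Finset.image_image]
          exact Finset.image_congr (fun j _ => hveq j)
        rw [h0]
        conv_lhs => rw [hS]
        rw [Finset.image_union, Finset.image_union, hfix1, hfix2, hcrux]
      rw [himgS]
      ext x
      simp only [Finset.mem_union, Finset.mem_sdiff, Finset.mem_Icc, Finset.mem_filter]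
      by_cases ha1 : x ∈ Finset.image
          (fun j => readingWord (m-1) n (fun p => col (p.1, p.2+1)) j) (Finset.Icc 1 k)
        <;> by_cases ha2 : x ∈ Finset.image X (Finset.Icc 1 t)
        <;> by_cases ha3 : x ∈ Finset.image Y (Finset.Icc 1 t)
        <;> first
          | (have hx1 := hSrange x ha1
             first
               | (have hx2 := hXr x ha2
                  first | (have hx3 := hYr2 x ha3) | skip)
               | (first | (have hx3 := hYr2 x ha3) | skip))
          | (first
               | (have hx2 := hXr x ha2
                  first | (have hx3 := hYr2 x ha3) | skip)
               | (first | (have hx3 := hYr2 x ha3) | skip))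
      all_goals simp only [ha1, ha2, ha3, iff_true, iff_false, not_true, not_false_iff,
        true_and, and_true, false_and, and_false, true_or, or_true, false_or, or_false,
        true_iff, false_iff, not_and, not_or]
      all_goals omega

/-- Let `col` be an `m × n` Cauchon diagram with associated permutation `v`, let
`k ∈ {n+1,...,m+n-1}`, and let `(X 1, Y 1),...,(X t, Y t)` be the chain rooted at box `k`
on the south-east border.  Then
`({1,...,m} \ {X 1,...,X t}) ∪ {Y 1,...,Y t} = ({1,...,m+n} \ v({1,...,k})) ∪ {1,...,k-n}`. -/
theorem chain_at_boxSE_eq_complement_high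
    (m n : ℕ) (hm : 2 ≤ m) (hn : 2 ≤ n)
    (col : ℕ × ℕ → Bool) (hC : IsCauchon m n col)
    (k : ℕ) (hk1 : n + 1 ≤ k) (hkn : k ≤ m + n - 1)
    (t : ℕ) (X Y : ℕ → ℕ)
    (hchain : IsChainRootedAt m n col (boxSE m n k).1 (boxSE m n k).2 t X Y) :
    (Finset.Icc 1 m \ Finset.image X (Finset.Icc 1 t)) ∪
        Finset.image Y (Finset.Icc 1 t) =
      (Finset.Icc 1 (m + n) \
        Finset.image (fun j => assocPerm m n col j) (Finset.Icc 1 k)) ∪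
        Finset.Icc 1 (k - n) := by
  have hbox : boxSE m n k = (k - n + 1, m + n) := by
    rw [boxSE, if_neg (by omega)]
  rw [hbox] at hchain
  exact main_aux m n hm hn col hC k hk1 hkn t X Y hchain
end

section
/- Let C be an m×n Cauchon diagram with associated permutation v, let k ∈ {1,...,n}, put I_k = v({1,...,k}) (the image of {1,...,k} under v), and let (x_1,y_1),...,(x_t,y_t) be the chain rooted at box k on the south-east border. Then {x_1,...,x_t} = p_1(I_k) and {y_1,...,y_t} = {m+1,...,m+k} \ p_2(I_k). -/
namespace ChainAux

/-- Sliding left from `x` while the square just to the left (index `x-1-c`) is black. -/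
def slide (c : ℕ) (B : ℕ → Bool) (x : ℕ) : ℕ :=
  if h : c < x ∧ B (x - 1 - c) = true then slide c B (x - 1) else x
termination_by x
decreasing_by omega

/-- The word of one row: product over `j < len` of `swap (c+j) (c+j+1)` when `B j`. -/
def rowWord (c : ℕ) (B : ℕ → Bool) (len : ℕ) : Equiv.Perm ℕ :=
  ((List.range len).map fun j => if B j then Equiv.swap (c + j) (c + j + 1) else 1).prod

def model (c : ℕ) (B : ℕ → Bool) (len x : ℕ) : ℕ :=
  if c ≤ x ∧ x < c + len ∧ B (x - c) = true then x + 1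
  else if c ≤ x ∧ x ≤ c + len then slide c B x else x

lemma slide_le (c : ℕ) (B : ℕ → Bool) : ∀ x, slide c B x ≤ x := by
  intro x
  induction x using Nat.strong_induction_on with
  | _ x ih =>
    rw [slide]
    split
    · next h => exact le_trans (ih (x-1) (by omega)) (by omega)
    · exact le_rfl

lemma slide_ge (c : ℕ) (B : ℕ → Bool) : ∀ x, c ≤ x → c ≤ slide c B x := by
  intro x
  induction x using Nat.strong_induction_on with
  | _ x ih =>
    intro hx
    rw [slide]
    split
    · next h => exact ih (x-1) (by omega) (by omega)
    · exact hx

lemma slide_stop (c : ℕ) (B : ℕ → Bool) (x : ℕ) (h : ¬(c < x ∧ B (x - 1 - c) = true)) :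
    slide c B x = x := by
  rw [slide, dif_neg h]

lemma slide_step (c : ℕ) (B : ℕ → Bool) (x : ℕ) (h1 : c < x) (h2 : B (x - 1 - c) = true) :
    slide c B x = slide c B (x - 1) := by
  rw [slide]; rw [dif_pos ⟨h1, h2⟩]

lemma rowWord_zero (c : ℕ) (B : ℕ → Bool) : rowWord c B 0 = 1 := by
  simp [rowWord]

lemma rowWord_succ (c : ℕ) (B : ℕ → Bool) (len : ℕ) :
    rowWord c B (len+1)
      = rowWord c B len * (if B len then Equiv.swap (c+len) (c+len+1) else 1) := by
  unfold rowWord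
  rw [List.range_succ, List.map_append, List.prod_append]
  simp

lemma rowWord_apply (c : ℕ) (B : ℕ → Bool) : ∀ len x, rowWord c B len x = model c B len x := by
  intro len
  induction len with
  | zero =>
    intro x
    rw [rowWord_zero]
    unfold model
    split_ifs with h1 h2
    · omega
    · have hx : x = c := by omega
      subst hx
      rw [slide_stop _ _ _ (by omega)]
      rfl
    · rfl
  | succ len ihl =>
    intro x
    rw [rowWord_succ, Equiv.Perm.mul_apply]
    by_cases hB : B len = true
    · rw [if_pos hB]
      by_cases h1 : x = c + len
      · subst h1
        rw [Equiv.swap_apply_left, ihl]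
        unfold model
        rw [if_neg (by rintro ⟨-, h, -⟩; omega), if_neg (by rintro ⟨-, h⟩; omega),
          if_pos ⟨by omega, by omega, by rw [show c + len - c = len by omega]; exact hB⟩]
      · by_cases h2 : x = c + len + 1
        · subst h2
          rw [Equiv.swap_apply_right, ihl]
          unfold model
          have e1 : (c + len) - c = len := by omega
          rw [e1]
          have e3 : slide c B (c + len + 1) = slide c B (c + len) := by
            rw [slide_step _ _ _ (by omega)
              (by rw [show c + len + 1 - 1 - c = len by omega]; exact hB)]
            rw [show c + len + 1 - 1 = c + len by omega]
          rw [if_neg (by rintro ⟨-, h, -⟩; omega), if_pos ⟨by omega, by omega⟩,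
            if_neg (by rintro ⟨-, h, -⟩; omega), if_pos ⟨by omega, by omega⟩, e3]
        · rw [Equiv.swap_apply_of_ne_of_ne h1 h2, ihl]
          unfold model
          by_cases hBx : B (x - c) = true <;>
            simp only [hBx, Bool.false_eq_true, and_true, and_false, if_false] <;>
            (generalize slide c B x = s) <;> split_ifs <;> omega
    · rw [if_neg hB, Equiv.Perm.one_apply, ihl]
      unfold model
      by_cases h2 : x = c + len + 1
      · subst h2
        have e3 : slide c B (c + len + 1) = c + len + 1 := by
          apply slide_stop
          rw [show c + len + 1 - 1 - c = len by omega]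
          simp [hB]
        rw [e3]
        split_ifs <;> omega
      · by_cases h1 : x = c + len
        · subst h1
          rw [show c + len - c = len by omega]
          simp only [hB, Bool.false_eq_true, and_false, if_false]
          generalize slide c B (c + len) = s
          split_ifs <;> omega
        · by_cases hBx : B (x - c) = true <;>
            simp only [hBx, Bool.false_eq_true, and_true, and_false, if_false] <;>
            (generalize slide c B x = s) <;> split_ifs <;> omega

lemma rowWord_fix_low (c : ℕ) (B : ℕ → Bool) (len x : ℕ) (h : x < c) :
    rowWord c B len x = x := by
  rw [rowWord_apply]; unfold model; split_ifs <;> omega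

lemma rowWord_black (c : ℕ) (B : ℕ → Bool) (len x : ℕ)
    (h1 : c ≤ x) (h2 : x < c + len) (h3 : B (x - c) = true) :
    rowWord c B len x = x + 1 := by
  rw [rowWord_apply]; unfold model; rw [if_pos ⟨h1, h2, h3⟩]

lemma rowWord_le (c : ℕ) (B : ℕ → Bool) (len x : ℕ) : rowWord c B len x ≤ x + 1 := by
  rw [rowWord_apply]; unfold model
  split_ifs
  · omega
  · exact le_trans (slide_le c B x) (by omega)
  · omega

lemma rowWord_ge (c : ℕ) (B : ℕ → Bool) (len x : ℕ) (h : c ≤ x) : c ≤ rowWord c B len x := by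
  rw [rowWord_apply]; unfold model
  split_ifs
  · omega
  · exact slide_ge c B x h
  · exact h

lemma rowWord_white (c : ℕ) (B : ℕ → Bool) (len x : ℕ)
    (h1 : c ≤ x) (h2 : x ≤ c + len) (h3 : B (x - c) = false) :
    rowWord c B len x ≤ x := by
  rw [rowWord_apply]; unfold model
  split_ifs with ha hb
  · rw [h3] at ha; simp at ha
  · exact slide_le c B x
  · exact le_rfl

lemma readingWord_zero (n : ℕ) (P : ℕ × ℕ → Bool) : readingWord 0 n P = 1 := by
  simp [readingWord]

/-- Peeling off the top row of an `(m+1)`-row grid. -/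
lemma readingWord_peel (m n : ℕ) (col : ℕ × ℕ → Bool) :
    readingWord (m+1) n col =
      rowWord (m+1) (fun j => col (m+1, m+2+j)) n *
        readingWord m n (fun p => col (p.1, p.2 + 1)) := by
  unfold readingWord rowWord
  rw [List.range_succ_eq_map, List.map_cons, List.prod_cons, List.map_map]
  congr 1
  · refine congrArg List.prod ?_
    refine List.map_congr_left fun j _ => ?_
    have e1 : (m + 1 : ℕ) - 0 = m + 1 := by omega
    have e2 : m + 1 + 1 + j = m + 2 + j := by omega
    rw [e1, e2]
    by_cases h : col (m+1, m+2+j) = true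
    · simp only [h, if_true, sqPerm]
      congr 1 <;> omega
    · simp [h]
  · refine congrArg List.prod ?_
    refine List.map_congr_left fun i _ => ?_
    refine congrArg List.prod ?_
    refine List.map_congr_left fun j _ => ?_
    have e1 : (m + 1 : ℕ) - (Nat.succ i) = m - i := by omega
    have e2 : m + 1 + 1 + j = (m + 1 + j) + 1 := by omega
    simp only [Function.comp]
    rw [e1, e2]
    by_cases h : col (m - i, m + 1 + j + 1) = true
    · simp only [h, if_true, sqPerm]
      congr 1 <;> omega
    · simp [h]

lemma prod_fix (l : List (Equiv.Perm ℕ)) (x : ℕ) (h : ∀ f ∈ l, f x = x) : l.prod x = x := by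
  induction l with
  | nil => rfl
  | cons f l ih =>
    rw [List.prod_cons, Equiv.Perm.mul_apply, ih (fun g hg => h g (List.mem_cons_of_mem f hg)),
      h f List.mem_cons_self]

lemma readingWord_fix (m n : ℕ) (P : ℕ × ℕ → Bool) (x : ℕ) (hx : x = 0 ∨ m + n < x) :
    readingWord m n P x = x := by
  unfold readingWord
  apply prod_fix
  intro f hf
  simp only [List.mem_map, List.mem_range] at hf
  obtain ⟨i, hi, rfl⟩ := hf
  apply prod_fix
  intro g hg
  simp only [List.mem_map, List.mem_range] at hg
  obtain ⟨j, hj, rfl⟩ := hg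
  split
  · unfold sqPerm
    apply Equiv.swap_apply_of_ne_of_ne <;> simp only [] <;> omega
  · rfl

lemma readingWord_mem (m n : ℕ) (P : ℕ × ℕ → Bool) (j : ℕ) (h1 : 1 ≤ j) (h2 : j ≤ m + n) :
    1 ≤ readingWord m n P j ∧ readingWord m n P j ≤ m + n := by
  by_contra h
  have hx : readingWord m n P j = 0 ∨ m + n < readingWord m n P j := by omega
  have := readingWord_fix m n P _ hx
  have hj : readingWord m n P j = j := (readingWord m n P).injective this
  omega

lemma perm_image_self (P : Equiv.Perm ℕ) (s : Finset ℕ) (h : ∀ x ∈ s, P x ∈ s) :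
    s.image (⇑P) = s :=
  Finset.eq_of_subset_of_card_le
    (fun y hy => by obtain ⟨x, hx, rfl⟩ := Finset.mem_image.1 hy; exact h x hx)
    (by rw [Finset.card_image_of_injective _ P.injective])

/-- A weakened version of the chain property, sufficient for the induction. -/
def WeakChain (m n : ℕ) (col : ℕ × ℕ → Bool) (k t : ℕ) (X Y : ℕ → ℕ) : Prop :=
  (∀ i, 1 ≤ i → i ≤ t → InGrid m n (X i, Y i) ∧ col (X i, Y i) = false) ∧
  (∀ a b, InGrid m n (a, b) → col (a, b) = false → b ≤ m + k →
    1 ≤ t ∧ X 1 ≤ a ∧ b ≤ Y 1) ∧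
  (1 ≤ t → Y 1 ≤ m + k) ∧
  (∀ i, 1 ≤ i → i < t → X i < X (i+1) ∧ Y (i+1) < Y i ∧
    ∀ a b, InGrid m n (a, b) → col (a, b) = false → X i < a → b < Y i →
      X (i+1) ≤ a ∧ b ≤ Y (i+1)) ∧
  (1 ≤ t → ∀ a b, InGrid m n (a, b) → col (a, b) = false → X t < a → b < Y t → False)

theorem aux (n k : ℕ) (hk1 : 1 ≤ k) (hkn : k ≤ n) :
    ∀ m (col : ℕ × ℕ → Bool), IsCauchon m n col → ∀ t X Y, WeakChain m n col k t X Y →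
    Finset.image X (Finset.Icc 1 t)
      = Finset.image (fun j => readingWord m n col j) (Finset.Icc 1 k) ∩ Finset.Icc 1 m ∧
    Finset.image Y (Finset.Icc 1 t)
      = Finset.Icc (m+1) (m+k) \
          (Finset.image (fun j => readingWord m n col j) (Finset.Icc 1 k)
            ∩ Finset.Icc (m+1) (m+n)) := by
  intro m
  induction m with
  | zero =>
    intro col hC t X Y hw
    obtain ⟨h1, h2, h3, h5, h6⟩ := hw
    have ht : t = 0 := by
      by_contra h
      have hg := (h1 1 le_rfl (by omega)).1
      have h11 := hg.1
      have h12 := hg.2.1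
      omega
    subst ht
    have hIcc : Finset.Icc (1:ℕ) 0 = ∅ := Finset.Icc_eq_empty (by omega)
    have hv : ∀ j, readingWord 0 n col j = j := fun j => by rw [readingWord_zero]; rfl
    constructor
    · rw [hIcc]
      simp
    · rw [hIcc, Finset.image_empty]
      ext x
      simp only [Finset.notMem_empty, false_iff, Finset.mem_sdiff, Finset.mem_inter,
        Finset.mem_image, Finset.mem_Icc]
      rintro ⟨⟨hx1, hx2⟩, hx3⟩
      exact hx3 ⟨⟨x, ⟨by omega, by omega⟩, hv x⟩, by omega, by omega⟩
  | succ m ih =>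
    intro col hC t X Y hw
    obtain ⟨h1, h2, h3, h5, h6⟩ := hw
    have hmem : ∀ i, 1 ≤ i → i ≤ t →
        (1 ≤ X i ∧ X i ≤ m + 1 ∧ m + 2 ≤ Y i ∧ Y i ≤ m + 1 + n) := by
      intro i hi hit
      obtain ⟨hg, -⟩ := h1 i hi hit
      exact ⟨hg.1, hg.2.1, hg.2.2.1, hg.2.2.2⟩
    have hwhite : ∀ i, 1 ≤ i → i ≤ t → col (X i, Y i) = false :=
      fun i hi hit => (h1 i hi hit).2
    have hmono : ∀ i, 1 ≤ i → ∀ j, i < j → j ≤ t → X i < X j ∧ Y j < Y i := by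
      intro i hi j hij
      induction j, hij using Nat.le_induction with
      | base => intro hjt; exact ⟨(h5 i hi (by omega)).1, (h5 i hi (by omega)).2.1⟩
      | succ j hj ihj =>
        intro hjt
        have hrec := ihj (by omega)
        have hst := h5 j (by omega) (by omega)
        exact ⟨lt_trans hrec.1 hst.1, lt_trans hst.2.1 hrec.2⟩
    have hmonoW : ∀ i j, 1 ≤ i → i ≤ j → j ≤ t → X i ≤ X j ∧ Y j ≤ Y i := by
      intro i j hi hij hjt
      rcases eq_or_lt_of_le hij with rfl | h
      · exact ⟨le_rfl, le_rfl⟩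
      · have := hmono i hi j h hjt; omega
    obtain ⟨t', ht'⟩ : ∃ t', (t' = t ∧ ¬(1 ≤ t ∧ X t = m + 1)) ∨ (t' + 1 = t ∧ X t = m + 1) := by
      by_cases h : 1 ≤ t ∧ X t = m + 1
      · exact ⟨t - 1, Or.inr ⟨by omega, h.2⟩⟩
      · exact ⟨t, Or.inl ⟨rfl, h⟩⟩
    have ht'le : t' ≤ t := by rcases ht' with ⟨h, -⟩ | ⟨h, -⟩ <;> omega
    have hX'le : ∀ i, 1 ≤ i → i ≤ t' → X i ≤ m := by
      intro i hi hit'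
      rcases ht' with ⟨heq, hno⟩ | ⟨hteq, hXt⟩
      · have hXt : X t ≤ m := by
          have hub := (hmem t (by omega) le_rfl).2.1
          have : ¬ (X t = m+1) := fun h => hno ⟨by omega, h⟩
          omega
        have := hmonoW i t hi (by omega) le_rfl; omega
      · have := hmono i hi t (by omega) le_rfl; omega
    set col' : ℕ × ℕ → Bool := fun p => col (p.1, p.2 + 1) with hcol'def
    have hC' : IsCauchon m n col' := by
      intro a b hg hb
      have hg2 : InGrid (m+1) n (a, b+1) :=
        ⟨hg.1, by have := hg.2.1; omega, by have := hg.2.2.1; omega, by have := hg.2.2.2; omega⟩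
      rcases hC a (b+1) hg2 hb with hrow | hcolm
      · left; intro b' hb1 hb2; exact hrow (b'+1) (by omega) (by omega)
      · right; intro a' ha1 ha2; exact hcolm a' ha1 (by omega)
    have hInG : ∀ a b, InGrid m n (a, b) → InGrid (m+1) n (a, b+1) := by
      intro a b hg
      exact ⟨hg.1, by have := hg.2.1; omega, by have := hg.2.2.1; omega, by have := hg.2.2.2; omega⟩
    have c1' : ∀ i, 1 ≤ i → i ≤ t' → InGrid m n (X i, Y i - 1) ∧ col' (X i, Y i - 1) = false := by
      intro i hi hit'
      have hb := hmem i hi (le_trans hit' ht'le)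
      refine ⟨⟨hb.1, hX'le i hi hit', by omega, by omega⟩, ?_⟩
      show col (X i, Y i - 1 + 1) = false
      rw [show Y i - 1 + 1 = Y i by omega]
      exact hwhite i hi (le_trans hit' ht'le)
    have c2' : ∀ a b, InGrid m n (a, b) → col' (a, b) = false → b ≤ m + k →
        1 ≤ t' ∧ X 1 ≤ a ∧ b ≤ Y 1 - 1 := by
      intro a b hg hwb hbk
      have hw2 : col (a, b+1) = false := hwb
      obtain ⟨ht1, hX1, hY1⟩ := h2 a (b+1) (hInG a b hg) hw2 (by omega)
      have ht'1 : 1 ≤ t' := by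
        rcases ht' with ⟨heq, -⟩ | ⟨hteq, hXt⟩
        · omega
        · by_contra h0
          have ht1' : t = 1 := by omega
          rw [ht1'] at hXt
          have := hg.2.1
          omega
      exact ⟨ht'1, hX1, by omega⟩
    have c3' : 1 ≤ t' → Y 1 - 1 ≤ m + k := fun h => by have := h3 (by omega); omega
    have c5' : ∀ i, 1 ≤ i → i < t' → X i < X (i+1) ∧ Y (i+1) - 1 < Y i - 1 ∧
        ∀ a b, InGrid m n (a, b) → col' (a, b) = false → X i < a → b < Y i - 1 →
          X (i+1) ≤ a ∧ b ≤ Y (i+1) - 1 := by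
      intro i hi hit'
      have hst := h5 i hi (by omega)
      have hbi := hmem i hi (by omega)
      have hbi1 := hmem (i+1) (by omega) (by omega)
      refine ⟨hst.1, by omega, ?_⟩
      intro a b hg hwb ha hb
      have := hst.2.2 a (b+1) (hInG a b hg) hwb ha (by omega)
      exact ⟨this.1, by omega⟩
    have c6' : 1 ≤ t' → ∀ a b, InGrid m n (a, b) → col' (a, b) = false →
        X t' < a → b < Y t' - 1 → False := by
      intro ht'1 a b hg hwb ha hb
      have hbt' := hmem t' (by omega) ht'le
      rcases ht' with ⟨heq, -⟩ | ⟨hteq, hXt⟩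
      · subst heq
        exact h6 ht'1 a (b+1) (hInG a b hg) hwb ha (by omega)
      · have hst := h5 t' ht'1 (by omega)
        have hm := hst.2.2 a (b+1) (hInG a b hg) hwb ha (by omega)
        rw [← hteq] at hXt
        have := hg.2.1
        omega
    obtain ⟨IH1, IH2⟩ := ih col' hC' t' X (fun i => Y i - 1) ⟨c1', c2', c3', c5', c6'⟩
    set Sf' := Finset.image (fun j => readingWord m n col' j) (Finset.Icc 1 k) with hSf'
    set A := Sf' ∩ Finset.Icc (m+1) (m+n) with hA
    have hSsub : ∀ x ∈ Sf', 1 ≤ x ∧ x ≤ m + n := by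
      intro x hx
      rw [hSf'] at hx
      obtain ⟨j, hj, rfl⟩ := Finset.mem_image.1 hx
      have hj' := Finset.mem_Icc.1 hj
      exact readingWord_mem m n col' j hj'.1 (by omega)
    have hScard : Sf'.card = k := by
      rw [hSf', Finset.card_image_of_injective _ (readingWord m n col').injective, Nat.card_Icc]
      omega
    have hXinj : Set.InjOn X (Finset.Icc 1 t') := by
      intro i hi j hj hij
      simp only [Finset.coe_Icc, Set.mem_Icc] at hi hj
      by_contra hne
      rcases lt_or_gt_of_ne hne with h | h
      · have := hmono i hi.1 j h (le_trans hj.2 ht'le); omega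
      · have := hmono j hj.1 i h (le_trans hi.2 ht'le); omega
    have hYinj : Set.InjOn (fun i => Y i - 1) (Finset.Icc 1 t') := by
      intro i hi j hj hij
      simp only [Finset.coe_Icc, Set.mem_Icc] at hi hj
      simp only [] at hij
      have hbi := hmem i hi.1 (le_trans hi.2 ht'le)
      have hbj := hmem j hj.1 (le_trans hj.2 ht'le)
      by_contra hne
      rcases lt_or_gt_of_ne hne with h | h
      · have := hmono i hi.1 j h (le_trans hj.2 ht'le); omega
      · have := hmono j hj.1 i h (le_trans hi.2 ht'le); omega
    have hLcard : (Sf' ∩ Finset.Icc 1 m).card = t' := by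
      rw [← IH1, Finset.card_image_of_injOn hXinj, Nat.card_Icc]; omega
    have hY'card : (Finset.image (fun i => Y i - 1) (Finset.Icc 1 t')).card = t' := by
      rw [Finset.card_image_of_injOn hYinj, Nat.card_Icc]; omega
    have hAcard : A.card + t' = k := by
      have hun : (Sf' ∩ Finset.Icc 1 m) ∪ A = Sf' := by
        ext x
        simp only [Finset.mem_union, Finset.mem_inter, Finset.mem_Icc, hA]
        constructor
        · rintro (⟨h, -⟩ | ⟨h, -⟩) <;> exact h
        · intro hx
          have := hSsub x hx
          rcases le_or_gt x m with h | h
          · exact Or.inl ⟨hx, by omega, h⟩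
          · exact Or.inr ⟨hx, h, by omega⟩
      have hdis : Disjoint (Sf' ∩ Finset.Icc 1 m) A := by
        rw [Finset.disjoint_left]
        intro x hx1 hx2
        rw [hA] at hx2
        have u1 := (Finset.mem_Icc.1 (Finset.mem_inter.1 hx1).2).2
        have u2 := (Finset.mem_Icc.1 (Finset.mem_inter.1 hx2).2).1
        omega
      have hcu := Finset.card_union_of_disjoint hdis
      rw [hun, hScard, hLcard] at hcu
      omega
    have hAsubk : ∀ x ∈ A, x ≤ m + k := by
      have hsd : (Finset.Icc (m+1) (m+k) \ A).card = t' := by rw [← IH2]; exact hY'card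
      have h1c := Finset.card_sdiff_add_card_inter (Finset.Icc (m+1) (m+k)) A
      have hIcck : (Finset.Icc (m+1) (m+k)).card = k := by rw [Nat.card_Icc]; omega
      have heq : Finset.Icc (m+1) (m+k) ∩ A = A :=
        Finset.eq_of_subset_of_card_le Finset.inter_subset_right (by omega)
      intro x hx
      rw [← heq] at hx
      exact (Finset.mem_Icc.1 (Finset.mem_inter.1 hx).1).2
    have hY'mem : ∀ x, x ∈ Finset.image (fun i => Y i - 1) (Finset.Icc 1 t') ↔
        (m+1 ≤ x ∧ x ≤ m+k ∧ x ∉ A) := by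
      intro x
      rw [IH2]
      simp only [Finset.mem_sdiff, Finset.mem_Icc]
      rw [and_assoc]
    have hTB : ∀ b, m+2 ≤ b → b ≤ m+1+k → col (m+1, b) = false →
        (∃ i, 1 ≤ i ∧ i ≤ t ∧ Y i = b) ∨ (1 ≤ t ∧ X t = m+1 ∧ b < Y t) := by
      intro b hb1 hb2 hwb
      have hg : InGrid (m+1) n (m+1, b) := by simp only [InGrid]; omega
      obtain ⟨ht1, -, hbY1⟩ := h2 (m+1) b hg hwb (by omega)
      have main : ∀ d i, 1 ≤ i → i + d = t → b ≤ Y i →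
          (∃ i', 1 ≤ i' ∧ i' ≤ t ∧ Y i' = b) ∨ (1 ≤ t ∧ X t = m+1 ∧ b < Y t) := by
        intro d
        induction d with
        | zero =>
          intro i hi hit hbY
          have hit' : i = t := by omega
          subst hit'
          rcases eq_or_lt_of_le hbY with heq | hlt
          · exact Or.inl ⟨i, hi, le_rfl, heq.symm⟩
          · by_cases hXtm : X i = m + 1
            · exact Or.inr ⟨by omega, hXtm, hlt⟩
            · exfalso
              have hXub := (hmem i hi le_rfl).2.1
              exact h6 (by omega) (m+1) b hg hwb (by omega) hlt
        | succ d ihd =>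
          intro i hi hit hbY
          rcases eq_or_lt_of_le hbY with heq | hlt
          · exact Or.inl ⟨i, hi, by omega, heq.symm⟩
          · have hXi : X i ≤ m := by
              have hm1 := hmono i hi t (by omega) le_rfl
              have hm2 := (hmem t (by omega) le_rfl).2.1
              omega
            have hnext := (h5 i hi (by omega)).2.2 (m+1) b hg hwb (by omega) hlt
            exact ihd (i+1) (by omega) (by omega) hnext.2
      exact main (t - 1) 1 le_rfl (by omega) hbY1
    set B : ℕ → Bool := fun j => col (m+1, m+2+j) with hBdef
    set Ptop := rowWord (m+1) B n with hPdef
    have hBa : ∀ a, m+1 ≤ a → B (a - (m+1)) = col (m+1, a+1) := by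
      intro a ha
      rw [hBdef]
      simp only []
      rw [show m+2+(a - (m+1)) = a+1 from by omega]
    have hveq : ∀ j, readingWord (m+1) n col j = Ptop (readingWord m n col' j) := by
      intro j
      rw [readingWord_peel m n col, ← hBdef, ← hcol'def, ← hPdef, Equiv.Perm.mul_apply]
    have hS : Finset.image (fun j => readingWord (m+1) n col j) (Finset.Icc 1 k)
        = Sf'.image ⇑Ptop := by
      have he : (fun j => readingWord (m+1) n col j)
          = fun j => Ptop (readingWord m n col' j) := funext hveq
      rw [he, hSf', Finset.image_image]
      rfl
    have hPfix : ∀ x, x ≤ m → Ptop x = x := fun x hx => by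
      rw [hPdef]; exact rowWord_fix_low _ _ _ _ (by omega)
    have hPblack : ∀ a, m+1 ≤ a → a ≤ m + n → col (m+1, a+1) = true → Ptop a = a + 1 := by
      intro a ha1 ha2 hb
      rw [hPdef]
      exact rowWord_black _ _ _ _ (by omega) (by omega) (by rw [hBa a ha1]; exact hb)
    have hPge : ∀ a, m+1 ≤ a → m+1 ≤ Ptop a := fun a ha => by
      rw [hPdef]; exact rowWord_ge _ _ _ _ ha
    have hYshift : ∀ s, s ≤ t → Finset.image Y (Finset.Icc 1 s)
        = Finset.image (fun x => x + 1) (Finset.image (fun i => Y i - 1) (Finset.Icc 1 s)) := by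
      intro s hs
      rw [Finset.image_image]
      apply Finset.image_congr
      intro i hi
      simp only [Finset.coe_Icc, Set.mem_Icc] at hi
      have := (hmem i hi.1 (le_trans hi.2 hs)).2.2.1
      simp only [Function.comp]
      omega
    rw [hS]
    rcases ht' with ⟨heq, hno⟩ | ⟨hteq, hXt⟩
    · -- CASE A: the chain does not reach the top row
      subst heq
      have hblackA : ∀ a ∈ A, col (m+1, a+1) = true := by
        intro a haA
        have hab : m+1 ≤ a ∧ a ≤ m+n := by
          have := Finset.mem_Icc.1 (Finset.mem_inter.1 (hA ▸ haA)).2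
          omega
        have hak := hAsubk a haA
        rcases hcc : col (m+1, a+1) with _ | _
        · exfalso
          rcases hTB (a+1) (by omega) (by omega) hcc with ⟨i, hi1, hi2, hYi⟩ | ⟨ht1, hXtm, -⟩
          · have hmemY : a ∈ Finset.image (fun i => Y i - 1) (Finset.Icc 1 t') :=
              Finset.mem_image.2 ⟨i, Finset.mem_Icc.2 ⟨hi1, by omega⟩,
                by have := (hmem i hi1 hi2).2.2.1; omega⟩
            exact ((hY'mem a).1 hmemY).2.2 haA
          · exact hno ⟨ht1, hXtm⟩
        · rfl
      have himA : ∀ a ∈ A, Ptop a = a + 1 := by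
        intro a haA
        have hab := Finset.mem_Icc.1 (Finset.mem_inter.1 (hA ▸ haA)).2
        exact hPblack a hab.1 hab.2 (hblackA a haA)
      constructor
      · rw [IH1]
        ext x
        simp only [Finset.mem_inter, Finset.mem_Icc, Finset.mem_image]
        constructor
        · rintro ⟨hx, hx1, hx2⟩
          exact ⟨⟨x, hx, hPfix x hx2⟩, hx1, by omega⟩
        · rintro ⟨⟨y, hy, rfl⟩, hh1, hh2⟩
          have hyb := hSsub y hy
          rcases le_or_gt y m with hym | hym
          · rw [hPfix y hym]
            rw [hPfix y hym] at hh1 hh2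
            exact ⟨hy, hh1, hym⟩
          · exfalso
            have hyA : y ∈ A := by
              rw [hA]
              exact Finset.mem_inter.2 ⟨hy, Finset.mem_Icc.2 ⟨by omega, hyb.2⟩⟩
            rw [himA y hyA] at hh2
            omega
      · rw [hYshift t' le_rfl, IH2]
        ext x
        simp only [Finset.mem_image, Finset.mem_sdiff, Finset.mem_inter, Finset.mem_Icc]
        constructor
        · rintro ⟨y', ⟨⟨hy1, hy2⟩, hynA⟩, rfl⟩
          refine ⟨⟨by omega, by omega⟩, ?_⟩
          rintro ⟨⟨z, hz, hzeq⟩, hz1, hz2⟩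
          have hzb := hSsub z hz
          rcases le_or_gt z m with hzm | hzm
          · rw [hPfix z hzm] at hzeq; omega
          · have hzA : z ∈ A := by
              rw [hA]
              exact Finset.mem_inter.2 ⟨hz, Finset.mem_Icc.2 ⟨by omega, hzb.2⟩⟩
            rw [himA z hzA] at hzeq
            have hzy : z = y' := by omega
            exact hynA (hzy ▸ hzA)
        · rintro ⟨⟨hx1, hx2⟩, hnot⟩
          refine ⟨x - 1, ⟨⟨by omega, by omega⟩, ?_⟩, by omega⟩
          intro hxA
          refine hnot ⟨⟨x - 1, (Finset.mem_inter.1 (hA ▸ hxA)).1, ?_⟩, by omega, ?_⟩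
          · rw [himA (x-1) hxA]; omega
          · have := Finset.mem_Icc.1 (Finset.mem_inter.1 (hA ▸ hxA)).2
            omega
    · -- CASE B: the chain reaches the top row
      have ht1 : 1 ≤ t := by omega
      have hYT2 : m + 2 ≤ Y t := (hmem t ht1 le_rfl).2.2.1
      have hYTn : Y t ≤ m + 1 + n := (hmem t ht1 le_rfl).2.2.2
      have hYTk : Y t ≤ m + 1 + k := by
        have hh := h3 ht1
        have := hmonoW 1 t (by omega) (by omega) le_rfl
        omega
      have hYtw : col (m+1, Y t) = false := by
        have := hwhite t ht1 le_rfl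
        rw [hXt] at this
        exact this
      have hJA : ∀ x, m+1 ≤ x → x ≤ Y t - 1 → x ∈ A := by
        intro x hx1 hx2
        by_contra hxA
        have hxk : x ≤ m + k := by omega
        have hxim : x ∈ Finset.image (fun i => Y i - 1) (Finset.Icc 1 t') :=
          (hY'mem x).2 ⟨hx1, hxk, hxA⟩
        obtain ⟨i, hi, hYi⟩ := Finset.mem_image.1 hxim
        rw [Finset.mem_Icc] at hi
        have hit : i < t := by omega
        have hmn := hmono i hi.1 t hit le_rfl
        have := (hmem i hi.1 (by omega)).2.2.1
        have hYi' : Y i - 1 = x := hYi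
        omega
      have hblackHigh : ∀ a ∈ A, Y t ≤ a → col (m+1, a+1) = true := by
        intro a haA haY
        have hak := hAsubk a haA
        rcases hcc : col (m+1, a+1) with _ | _
        · exfalso
          rcases hTB (a+1) (by omega) (by omega) hcc with ⟨i, hi1, hi2, hYi⟩ | ⟨-, -, hlt⟩
          · by_cases hit : i = t
            · rw [hit] at hYi; omega
            · have hmemY : a ∈ Finset.image (fun i => Y i - 1) (Finset.Icc 1 t') :=
                Finset.mem_image.2 ⟨i, Finset.mem_Icc.2 ⟨hi1, by omega⟩,
                  by have := (hmem i hi1 hi2).2.2.1; omega⟩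
              exact ((hY'mem a).1 hmemY).2.2 haA
          · omega
        · rfl
      have himHigh : ∀ a ∈ A, Y t ≤ a → Ptop a = a + 1 := by
        intro a haA haY
        have hab := Finset.mem_Icc.1 (Finset.mem_inter.1 (hA ▸ haA)).2
        exact hPblack a hab.1 hab.2 (hblackHigh a haA haY)
      have hJinv : ∀ x ∈ Finset.Icc (m+1) (Y t - 1), Ptop x ∈ Finset.Icc (m+1) (Y t - 1) := by
        intro x hx
        rw [Finset.mem_Icc] at hx ⊢
        refine ⟨hPge x hx.1, ?_⟩
        rcases hcc : col (m+1, x+1) with _ | _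
        · have hle : Ptop x ≤ x := by
            rw [hPdef]
            exact rowWord_white _ _ _ _ (by omega) (by omega)
              (by rw [hBa x (by omega)]; exact hcc)
          omega
        · have hne : x + 1 ≠ Y t := by
            intro h
            rw [h, hYtw] at hcc
            cases hcc
          have := hPblack x (by omega) (by omega) hcc
          omega
      have hJim : (Finset.Icc (m+1) (Y t - 1)).image ⇑Ptop = Finset.Icc (m+1) (Y t - 1) :=
        perm_image_self _ _ hJinv
      have hIcct : Finset.Icc 1 t = insert t (Finset.Icc 1 t') := by
        ext i
        simp only [Finset.mem_insert, Finset.mem_Icc]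
        omega
      constructor
      · rw [hIcct, Finset.image_insert, IH1, hXt]
        ext x
        simp only [Finset.mem_insert, Finset.mem_inter, Finset.mem_Icc, Finset.mem_image]
        constructor
        · rintro (rfl | ⟨hx, hx1, hx2⟩)
          · have hm1 : (m+1 : ℕ) ∈ (Finset.Icc (m+1) (Y t - 1)).image ⇑Ptop := by
              rw [hJim]
              exact Finset.mem_Icc.2 ⟨le_rfl, by omega⟩
            obtain ⟨y, hy, hyeq⟩ := Finset.mem_image.1 hm1
            rw [Finset.mem_Icc] at hy
            have hyA : y ∈ A := hJA y hy.1 hy.2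
            exact ⟨⟨y, (Finset.mem_inter.1 (hA ▸ hyA)).1, hyeq⟩, by omega, le_rfl⟩
          · exact ⟨⟨x, hx, hPfix x hx2⟩, hx1, by omega⟩
        · rintro ⟨⟨y, hy, rfl⟩, hh1, hh2⟩
          have hyb := hSsub y hy
          rcases le_or_gt y m with hym | hym
          · right
            rw [hPfix y hym]
            rw [hPfix y hym] at hh1 hh2
            exact ⟨hy, hh1, hym⟩
          · left
            have hyA : y ∈ A := by
              rw [hA]
              exact Finset.mem_inter.2 ⟨hy, Finset.mem_Icc.2 ⟨by omega, hyb.2⟩⟩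
            rcases le_or_gt (Y t) y with hyY | hyY
            · rw [himHigh y hyA hyY] at hh2
              omega
            · have hj := hJinv y (Finset.mem_Icc.2 ⟨by omega, by omega⟩)
              rw [Finset.mem_Icc] at hj
              omega
      · rw [hIcct, Finset.image_insert, hYshift t' (by omega), IH2]
        ext x
        simp only [Finset.mem_insert, Finset.mem_image, Finset.mem_sdiff, Finset.mem_inter,
          Finset.mem_Icc]
        constructor
        · rintro (rfl | ⟨y', ⟨⟨hy1, hy2⟩, hynA⟩, rfl⟩)
          · refine ⟨⟨by omega, by omega⟩, ?_⟩
            rintro ⟨⟨z, hz, hzeq⟩, hz1, hz2⟩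
            have hzb := hSsub z hz
            rcases le_or_gt z m with hzm | hzm
            · rw [hPfix z hzm] at hzeq; omega
            · have hzA : z ∈ A := by
                rw [hA]
                exact Finset.mem_inter.2 ⟨hz, Finset.mem_Icc.2 ⟨by omega, hzb.2⟩⟩
              rcases le_or_gt (Y t) z with hzY | hzY
              · rw [himHigh z hzA hzY] at hzeq
                omega
              · have hj := hJinv z (Finset.mem_Icc.2 ⟨by omega, by omega⟩)
                rw [Finset.mem_Icc] at hj
                omega
          · refine ⟨⟨by omega, by omega⟩, ?_⟩
            rintro ⟨⟨z, hz, hzeq⟩, hz1, hz2⟩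
            have hzb := hSsub z hz
            rcases le_or_gt z m with hzm | hzm
            · rw [hPfix z hzm] at hzeq; omega
            · have hzA : z ∈ A := by
                rw [hA]
                exact Finset.mem_inter.2 ⟨hz, Finset.mem_Icc.2 ⟨by omega, hzb.2⟩⟩
              rcases le_or_gt (Y t) z with hzY | hzY
              · rw [himHigh z hzA hzY] at hzeq
                have hzy : z = y' := by omega
                exact hynA (hzy ▸ hzA)
              · have hj := hJinv z (Finset.mem_Icc.2 ⟨by omega, by omega⟩)
                rw [Finset.mem_Icc] at hj
                have : y' ∈ A := hJA y' hy1 (by omega)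
                exact hynA this
        · rintro ⟨⟨hx1, hx2⟩, hnot⟩
          by_cases hxY : x = Y t
          · exact Or.inl hxY
          · right
            refine ⟨x - 1, ⟨⟨⟨by omega, by omega⟩, ?_⟩, by omega⟩⟩
            intro hxA
            rcases le_or_gt (Y t) (x-1) with hY | hY
            · refine hnot ⟨⟨x-1, (Finset.mem_inter.1 (hA ▸ hxA)).1, ?_⟩, by omega, ?_⟩
              · rw [himHigh (x-1) hxA hY]; omega
              · have := Finset.mem_Icc.1 (Finset.mem_inter.1 (hA ▸ hxA)).2
                omega
            · have hxJ : x ∈ Finset.Icc (m+1) (Y t - 1) :=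
                Finset.mem_Icc.2 ⟨by omega, by omega⟩
              rw [← hJim] at hxJ
              obtain ⟨z, hzJ, hzeq⟩ := Finset.mem_image.1 hxJ
              rw [Finset.mem_Icc] at hzJ
              have hzA : z ∈ A := hJA z hzJ.1 hzJ.2
              refine hnot ⟨⟨z, (Finset.mem_inter.1 (hA ▸ hzA)).1, hzeq⟩, by omega, ?_⟩
              have := Finset.mem_Icc.1 (Finset.mem_inter.1 (hA ▸ hzA)).2
              omega

end ChainAux

/-- Let `col` be an `m × n` Cauchon diagram with associated permutation `v`, let
`k ∈ {1,...,n}`, put `I_k = v({1,...,k})`, and let `(X 1, Y 1),...,(X t, Y t)` be the chain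
rooted at box `k` on the south-east border.  Then `{X 1,...,X t} = p₁(I_k)` and
`{Y 1,...,Y t} = {m+1,...,m+k} \ p₂(I_k)`. -/
theorem chain_at_boxSE_rows_cols_low
    (m n : ℕ) (hm : 2 ≤ m) (hn : 2 ≤ n)
    (col : ℕ × ℕ → Bool) (hC : IsCauchon m n col)
    (k : ℕ) (hk1 : 1 ≤ k) (hkn : k ≤ n)
    (t : ℕ) (X Y : ℕ → ℕ)
    (hchain : IsChainRootedAt m n col (boxSE m n k).1 (boxSE m n k).2 t X Y) :
    Finset.image X (Finset.Icc 1 t) =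
      Finset.image (fun j => assocPerm m n col j) (Finset.Icc 1 k) ∩ Finset.Icc 1 m ∧
    Finset.image Y (Finset.Icc 1 t) =
      Finset.Icc (m + 1) (m + k) \
        (Finset.image (fun j => assocPerm m n col j) (Finset.Icc 1 k) ∩
          Finset.Icc (m + 1) (m + n)) := by
  have hbox : boxSE m n k = (1, m + k) := by rw [boxSE, if_pos hkn]
  rw [hbox] at hchain
  obtain ⟨c1, c2, c3, c4, c5, c6⟩ := hchain
  have w2 : ∀ a b, InGrid m n (a, b) → col (a, b) = false → b ≤ m + k →
      1 ≤ t ∧ X 1 ≤ a ∧ b ≤ Y 1 := by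
    intro a b hg hw hb
    rcases hcol : col (1, m + k) with _ | _
    · obtain ⟨ht, hX1, hY1⟩ := c2 hcol
      exact ⟨ht, by rw [hX1]; exact hg.1, by rw [hY1]; exact hb⟩
    · have ht : 1 ≤ t := by
        by_contra h0
        exact c4 (by omega) a b hg hw hg.1 hb
      obtain ⟨-, -, hmax⟩ := c3 hcol ht
      obtain ⟨ha, hbb⟩ := hmax a b hg hw hg.1 hb
      exact ⟨ht, ha, hbb⟩
  have w3 : 1 ≤ t → Y 1 ≤ m + k := by
    intro ht
    rcases hcol : col (1, m + k) with _ | _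
    · exact le_of_eq (c2 hcol).2.2
    · exact (c3 hcol ht).2.1
  have hres := ChainAux.aux n k hk1 hkn m col hC t X Y ⟨c1, w2, w3, c5, c6⟩
  simpa only [assocPerm] using hres
end

section
/- Let C be an m×n Cauchon diagram with associated permutation v, let k ∈ {n+1,...,m+n-1}, put I_k = v({1,...,k}) (the image of {1,...,k} under v), and let (x_1,y_1),...,(x_t,y_t) be the chain rooted at box k on the south-east border. Then {1,...,k-n} ⊆ p_1(I_k), {x_1,...,x_t} = p_1(I_k) \ {1,...,k-n}, and {y_1,...,y_t} = {m+1,...,m+n} \ p_2(I_k). -/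
namespace CD

open Finset


open Finset

/-- the staircase row word: `W x e j = T_0 * T_1 * ⋯ * T_{j-1}` where `T_c` is the swap
`(x+c, x+c+1)` if `e c` and `1` otherwise; rightmost factor applied first. -/
def W (x : ℕ) (e : ℕ → Bool) : ℕ → Equiv.Perm ℕ
  | 0 => 1
  | j+1 => W x e j * (if e j then Equiv.swap (x+j) (x+j+1) else 1)

/-- `D x e (j0+1)` is the start of the maximal black run ending at `x+j0` (and `x+j0+1`
if `e j0 = false`). -/
def D (x : ℕ) (e : ℕ → Bool) : ℕ → ℕ
  | 0 => x
  | j+1 => if e j then D x e j else x+j+1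

lemma W_apply_of_lt (x : ℕ) (e : ℕ → Bool) (j u : ℕ) (hu : u < x) : W x e j u = u := by
  induction j with
  | zero => rfl
  | succ j ih =>
      have h1 : (if e j then Equiv.swap (x+j) (x+j+1) else 1) u = u := by
        split
        · exact Equiv.swap_apply_of_ne_of_ne (by omega) (by omega)
        · rfl
      simp only [W, Equiv.Perm.mul_apply, h1, ih]

lemma W_apply_of_gt (x : ℕ) (e : ℕ → Bool) (j u : ℕ) (hu : x + j < u) : W x e j u = u := by
  induction j with
  | zero => rfl
  | succ j ih =>
      have h1 : (if e j then Equiv.swap (x+j) (x+j+1) else 1) u = u := by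
        split
        · exact Equiv.swap_apply_of_ne_of_ne (by omega) (by omega)
        · rfl
      simp only [W, Equiv.Perm.mul_apply, h1]
      exact ih (by omega)

lemma W_stable (x : ℕ) (e : ℕ → Bool) (j0 : ℕ) :
    ∀ J, j0 + 1 ≤ J → ∀ v, v ≤ x + j0 → W x e J v = W x e (j0+1) v := by
  intro J
  induction J with
  | zero => omega
  | succ J ih =>
      intro hJ v hv
      rcases Nat.eq_or_lt_of_le hJ with h | h
      · rw [← h]
      · have h1 : (if e J then Equiv.swap (x+J) (x+J+1) else 1) v = v := by
          split
          · exact Equiv.swap_apply_of_ne_of_ne (by omega) (by omega)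
          · rfl
        simp only [W, Equiv.Perm.mul_apply, h1]
        exact ih (by omega) v hv

lemma W_black (x : ℕ) (e : ℕ → Bool) (j0 : ℕ) (he : e j0 = true) :
    ∀ J, j0 + 1 ≤ J → W x e J (x + j0) = x + j0 + 1 := by
  intro J hJ
  rw [W_stable x e j0 J hJ (x + j0) le_rfl]
  simp only [W, he, if_true, Equiv.Perm.mul_apply, Equiv.swap_apply_left]
  exact W_apply_of_gt x e j0 _ (by omega)

lemma W_mem (x : ℕ) (e : ℕ → Bool) (j : ℕ) : ∀ v : ℕ, x ≤ v → v ≤ x + j →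
    x ≤ W x e j v ∧ W x e j v ≤ x + j := by
  induction j with
  | zero =>
      intro v h1 h2
      simp only [W, Equiv.Perm.one_apply]
      omega
  | succ j ih =>
      intro v h1 h2
      by_cases hv : v ≤ x + j
      · have h1' : (if e j then Equiv.swap (x+j) (x+j+1) else 1) v = v ∨
            (if e j then Equiv.swap (x+j) (x+j+1) else 1) v = x + j + 1 := by
          split
          · by_cases hvj : v = x + j
            · right; rw [hvj, Equiv.swap_apply_left]
            · left; exact Equiv.swap_apply_of_ne_of_ne hvj (by omega)
          · left; rfl
        simp only [W, Equiv.Perm.mul_apply]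
        rcases h1' with h | h
        · rw [h]; have := ih v h1 hv; omega
        · rw [h, W_apply_of_gt x e j _ (by omega)]; omega
      · have hv' : v = x + j + 1 := by omega
        have h1' : (if e j then Equiv.swap (x+j) (x+j+1) else 1) v = v ∨
            (if e j then Equiv.swap (x+j) (x+j+1) else 1) v = x + j := by
          split
          · right; rw [hv', Equiv.swap_apply_right]
          · left; rfl
        simp only [W, Equiv.Perm.mul_apply]
        rcases h1' with h | h
        · rw [h, hv', W_apply_of_gt x e j _ (by omega)]; omega
        · rw [h]
          have := ih (x + j) (by omega) le_rfl
          omega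

lemma D_ge (x : ℕ) (e : ℕ → Bool) (j : ℕ) : x ≤ D x e j := by
  induction j with
  | zero => simp [D]
  | succ j ih => simp only [D]; split <;> omega

lemma D_le (x : ℕ) (e : ℕ → Bool) (j : ℕ) : D x e j ≤ x + j := by
  induction j with
  | zero => simp [D]
  | succ j ih => simp only [D]; split <;> omega

lemma D_black (x : ℕ) (e : ℕ → Bool) (j : ℕ) :
    ∀ i, i < j → D x e j ≤ x + i → e i = true := by
  induction j with
  | zero => omega
  | succ j ih =>
      intro i hi hDi
      by_cases hej : e j = true
      · simp only [D, hej, if_true] at hDi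
        rcases Nat.lt_or_ge i j with h | h
        · exact ih i h hDi
        · have : i = j := by omega
          rw [this]; exact hej
      · have hej' : e j = false := by simpa using hej
        simp only [D, hej', Bool.false_eq_true, if_false] at hDi
        omega

lemma D_white (x : ℕ) (e : ℕ → Bool) (j : ℕ) (h : x < D x e j) :
    e (D x e j - x - 1) = false := by
  induction j with
  | zero => simp [D] at h
  | succ j ih =>
      by_cases hej : e j = true
      · simp only [D, hej, if_true] at h ⊢
        exact ih h
      · have hej' : e j = false := by simpa using hej
        simp only [D, hej', Bool.false_eq_true, if_false] at h ⊢
        have : x + j + 1 - x - 1 = j := by omega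
        rw [this, hej']

lemma D_eq_of_black (x : ℕ) (e : ℕ → Bool) (j : ℕ) (h : e j = true) :
    D x e (j+1) = D x e j := by simp [D, h]

lemma D_eq_of_white (x : ℕ) (e : ℕ → Bool) (j : ℕ) (h : e j = false) :
    D x e (j+1) = x + j + 1 := by simp [D, h]

/-- key image formula for prefixes of the staircase word -/
lemma W_image_prefix (x : ℕ) (e : ℕ → Bool) :
    ∀ j0, Finset.image (W x e (j0+1)) (Icc x (x+j0)) = Icc x (x+j0+1) \ {D x e (j0+1)} := by
  intro j0
  induction j0 with
  | zero =>
      by_cases he : e 0 = true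
      · have : Finset.Icc x (x+0) = {x} := by simp
        rw [this, Finset.image_singleton]
        have h1 : W x e 1 x = x + 1 := W_black x e 0 he 1 le_rfl
        rw [h1, D_eq_of_black x e 0 he]
        simp only [D]
        ext c
        simp only [Finset.mem_singleton, Finset.mem_sdiff, Finset.mem_Icc]
        omega
      · have : Finset.Icc x (x+0) = {x} := by simp
        rw [this, Finset.image_singleton]
        have hW : W x e 1 x = x := by
          have he' : e 0 = false := by simpa using he
          simp only [W, he', Bool.false_eq_true, if_false, mul_one, Equiv.Perm.one_apply]
        rw [hW, D_eq_of_white x e 0 (by simpa using he)]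
        ext c
        simp only [Finset.mem_singleton, Finset.mem_sdiff, Finset.mem_Icc]
        omega
  | succ j0 ih =>
      by_cases he : e (j0+1) = true
      · have hsplit : W x e (j0+1+1) = W x e (j0+1) * Equiv.swap (x+j0+1) (x+j0+2) := by
          show W x e (j0+1) * _ = _
          rw [if_pos he]
          congr 2
        have hT : Finset.image (⇑(Equiv.swap (x+j0+1) (x+j0+2)))
            (Icc x (x+(j0+1))) = insert (x+j0+2) (Icc x (x+j0)) := by
          have h1 : Icc x (x+(j0+1)) = insert (x+j0+1) (Icc x (x+j0)) := by
            ext c; simp only [Finset.mem_insert, Finset.mem_Icc]; omega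
          rw [h1, Finset.image_insert, Equiv.swap_apply_left]
          congr 1
          rw [Finset.image_congr (g := id), Finset.image_id]
          intro c hc
          simp only [Finset.coe_Icc, Set.mem_Icc] at hc
          exact Equiv.swap_apply_of_ne_of_ne (by omega) (by omega)
        rw [hsplit, Equiv.Perm.coe_mul, ← Finset.image_image, hT, Finset.image_insert,
          W_apply_of_gt x e (j0+1) _ (by omega), ih]
        have hD := D_le x e (j0+1)
        have hD2 := D_ge x e (j0+1)
        rw [D_eq_of_black x e (j0+1) he]
        ext c
        simp only [Finset.mem_insert, Finset.mem_sdiff, Finset.mem_Icc, Finset.mem_singleton]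
        omega
      · have hsplit : W x e (j0+1+1) = W x e (j0+1) := by
          show W x e (j0+1) * _ = _
          rw [if_neg he, mul_one]
        rw [hsplit]
        have hinv : Finset.image (W x e (j0+1)) (Icc x (x+(j0+1))) = Icc x (x+(j0+1)) := by
          apply Finset.eq_of_subset_of_card_le
          · intro c hc
            simp only [Finset.mem_image] at hc
            obtain ⟨v, hv, rfl⟩ := hc
            simp only [Finset.mem_Icc] at hv ⊢
            have := W_mem x e (j0+1) v hv.1 hv.2
            omega
          · rw [Finset.card_image_of_injective _ (Equiv.injective _)]
        rw [hinv, D_eq_of_white x e (j0+1) (by simpa using he)]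
        ext c
        simp only [Finset.mem_sdiff, Finset.mem_Icc, Finset.mem_singleton]
        omega

/-- image of a low interval under the full row word -/
lemma W_image_low (x : ℕ) (e : ℕ → Bool) (n k : ℕ) (hk : x ≤ k) (hk2 : k < x + n) :
    Finset.image (W x e n) (Icc x k) = Icc x (k+1) \ {D x e (k-x+1)} := by
  have h1 : Finset.image (W x e n) (Icc x k) = Finset.image (W x e (k-x+1)) (Icc x k) := by
    apply Finset.image_congr
    intro v hv
    simp only [Finset.coe_Icc, Set.mem_Icc] at hv
    exact W_stable x e (k-x) n (by omega) v (by omega)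
  have h2 := W_image_prefix x e (k-x)
  have hx : x + (k-x) = k := by omega
  rw [hx] at h2
  rw [h1, h2]

/-- a high interval is stable under the full row word -/
lemma W_image_high (x : ℕ) (e : ℕ → Bool) (n K : ℕ) (hK : x + n ≤ K) :
    Finset.image (W x e n) (Icc x K) = Icc x K := by
  apply Finset.eq_of_subset_of_card_le
  · intro c hc
    simp only [Finset.mem_image] at hc
    obtain ⟨v, hv, rfl⟩ := hc
    simp only [Finset.mem_Icc] at hv ⊢
    by_cases h : v ≤ x + n
    · have := W_mem x e n v hv.1 h
      omega
    · rw [W_apply_of_gt x e n v (by omega)]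
      omega
  · rw [Finset.card_image_of_injective _ (Equiv.injective _)]



open Finset
/-- the word of the squares of row `a` satisfying `P` -/
def rowWord (m n : ℕ) (P : ℕ × ℕ → Bool) (a : ℕ) : Equiv.Perm ℕ :=
  ((List.range n).map fun j => if P (a, m + 1 + j) then sqPerm m (a, m+1+j) else 1).prod

lemma sqPerm_eq (m a j : ℕ) : sqPerm m (a, m+1+j) = Equiv.swap (a+j) (a+j+1) := by
  simp only [sqPerm]
  congr 1 <;> omega

lemma readingWord_rows (m n : ℕ) (P : ℕ × ℕ → Bool) :
    readingWord m n P = ((List.range m).map fun i => rowWord m n P (m - i)).prod := rfl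

lemma list_prod_fix (l : List (Equiv.Perm ℕ)) (u : ℕ) (h : ∀ f ∈ l, f u = u) :
    l.prod u = u := by
  induction l with
  | nil => rfl
  | cons a l ih =>
      rw [List.prod_cons, Equiv.Perm.mul_apply, ih (fun f hf => h f (List.mem_cons_of_mem a hf))]
      exact h a (List.mem_cons_self)

lemma rowWord_eq_W (m : ℕ) (P : ℕ × ℕ → Bool) (a : ℕ) :
    ∀ N, rowWord m N P a = W a (fun j => P (a, m+1+j)) N := by
  intro N
  induction N with
  | zero => rfl
  | succ N ih =>
      show ((List.range (N+1)).map _).prod = _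
      rw [List.range_succ, List.map_append, List.prod_append]
      show (_ : Equiv.Perm ℕ) * ([if P (a, m+1+N) then sqPerm m (a, m+1+N) else 1].prod) = _
      rw [List.prod_singleton]
      show rowWord m N P a * _ = _
      rw [ih]
      show _ = W a _ N * _
      congr 1
      split
      · rw [sqPerm_eq]
      · rfl

lemma rowWord_congr (m n : ℕ) (P Q : ℕ × ℕ → Bool) (a : ℕ)
    (h : ∀ j, j < n → P (a, m+1+j) = Q (a, m+1+j)) : rowWord m n P a = rowWord m n Q a := by
  unfold rowWord
  congr 1
  apply List.map_congr_left
  intro j hj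
  rw [h j (List.mem_range.mp hj)]

lemma rowWord_eq_one (m n : ℕ) (P : ℕ × ℕ → Bool) (a : ℕ)
    (h : ∀ j, j < n → P (a, m+1+j) = false) : rowWord m n P a = 1 := by
  apply List.prod_eq_one
  intro q hq
  obtain ⟨j, hj, rfl⟩ := List.mem_map.mp hq
  rw [h j (List.mem_range.mp hj), if_neg (by simp)]

lemma readingWord_split (m n : ℕ) (P : ℕ × ℕ → Bool) (x : ℕ) (hx : x ≤ m) :
    readingWord m n P =
      ((List.range (m-x)).map fun i => rowWord m n P (m - i)).prod *
      ((List.range x).map fun i => rowWord m n P (x - i)).prod := by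
  rw [readingWord_rows]
  have h1 : List.range m = List.range (m-x) ++ (List.range x).map (fun i => (m-x) + i) := by
    rw [← List.range_add]
    congr 1
    omega
  rw [h1, List.map_append, List.prod_append, List.map_map]
  congr 2
  apply List.map_congr_left
  intro i hi
  simp only [Function.comp_apply]
  congr 1
  have := List.mem_range.mp hi
  omega

lemma prod_head_ones (x : ℕ) (hx : 1 ≤ x) (G : ℕ → Equiv.Perm ℕ)
    (h : ∀ i, 1 ≤ i → i < x → G i = 1) :
    ((List.range x).map fun i => G (x - i)).prod = G x := by
  obtain ⟨y, rfl⟩ : ∃ y, x = y + 1 := ⟨x-1, by omega⟩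
  rw [List.range_succ_eq_map, List.map_cons, List.prod_cons, List.map_map]
  have h1 : ((List.range y).map ((fun i => G (y+1-i)) ∘ Nat.succ)).prod = 1 := by
    apply List.prod_eq_one
    intro q hq
    obtain ⟨i, hi, rfl⟩ := List.mem_map.mp hq
    have := List.mem_range.mp hi
    simp only [Function.comp_apply]
    exact h _ (by omega) (by omega)
  rw [h1, mul_one]
  norm_num

/-- `Vx x` : the reading word of the black squares in rows `≥ x`. -/
def Vx (m n : ℕ) (col : ℕ × ℕ → Bool) (x : ℕ) : Equiv.Perm ℕ :=
  readingWord m n (fun p => col p && decide (x ≤ p.1))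

lemma Vx_succ (m n : ℕ) (col : ℕ × ℕ → Bool) (x : ℕ) (hx1 : 1 ≤ x) (hxm : x ≤ m) :
    Vx m n col x = Vx m n col (x+1) * W x (fun j => col (x, m+1+j)) n := by
  unfold Vx
  rw [readingWord_split m n _ x hxm, readingWord_split m n _ x hxm]
  have hfirst : ((List.range (m-x)).map fun i => rowWord m n (fun p => col p && decide (x ≤ p.1)) (m - i)).prod
      = ((List.range (m-x)).map fun i => rowWord m n (fun p => col p && decide (x+1 ≤ p.1)) (m - i)).prod := by
    congr 1
    apply List.map_congr_left
    intro i hi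
    have hi' := List.mem_range.mp hi
    apply rowWord_congr
    intro j hj
    have : x ≤ m - i ∧ x + 1 ≤ m - i := by omega
    simp [this.1, this.2]
  have hsecond1 : ((List.range x).map fun i => rowWord m n (fun p => col p && decide (x ≤ p.1)) (x - i)).prod
      = W x (fun j => col (x, m+1+j)) n := by
    rw [prod_head_ones x hx1 _ ?_]
    · rw [rowWord_congr m n _ (fun p => col p) _ (fun j _ => by simp)]
      exact rowWord_eq_W m (fun p => col p) _ n
    · intro i hi1 hi2
      apply rowWord_eq_one
      intro j hj
      have : ¬ (x ≤ i) := by omega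
      simp [this]
  have hsecond2 : ((List.range x).map fun i => rowWord m n (fun p => col p && decide (x+1 ≤ p.1)) (x - i)).prod = 1 := by
    apply List.prod_eq_one
    intro q hq
    obtain ⟨i, hi, rfl⟩ := List.mem_map.mp hq
    apply rowWord_eq_one
    intro j hj
    have : ¬ (x + 1 ≤ x - i) := by omega
    simp [this]
  rw [hfirst, hsecond1, hsecond2, mul_one]

lemma Vx_top (m n : ℕ) (col : ℕ × ℕ → Bool) : Vx m n col (m+1) = 1 := by
  unfold Vx
  rw [readingWord_rows]
  apply List.prod_eq_one
  intro q hq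
  obtain ⟨i, hi, rfl⟩ := List.mem_map.mp hq
  apply rowWord_eq_one
  intro j hj
  have : ¬ (m + 1 ≤ m - i) := by omega
  simp [this]

lemma Vx_apply_lt (m n : ℕ) (col : ℕ × ℕ → Bool) (x u : ℕ) (hu : u < x) :
    Vx m n col x u = u := by
  unfold Vx
  rw [readingWord_rows]
  apply list_prod_fix
  intro f hf
  obtain ⟨i, hi, rfl⟩ := List.mem_map.mp hf
  apply list_prod_fix
  intro g hg
  obtain ⟨j, hj, rfl⟩ := List.mem_map.mp hg
  split
  · next h =>
      have hx : x ≤ m - i := by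
        have := (Bool.and_eq_true _ _).mp h
        exact of_decide_eq_true this.2
      rw [sqPerm_eq]
      exact Equiv.swap_apply_of_ne_of_ne (by omega) (by omega)
  · rfl

lemma col_pipe (m n : ℕ) (col : ℕ × ℕ → Bool) :
    ∀ d x, x + d = m → 1 ≤ x → ∀ b, m+1 ≤ b → b ≤ m+n →
    (∀ a, x ≤ a → a ≤ m → col (a,b) = true) → Vx m n col x (x + b - m - 1) = b := by
  intro d
  induction d with
  | zero =>
      intro x hxd hx1 b hb1 hb2 hall
      rw [Vx_succ m n col x hx1 (by omega), Equiv.Perm.mul_apply]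
      have hc : x + b - m - 1 = x + (b - m - 1) := by omega
      rw [hc]
      have he : col (x, m+1+(b-m-1)) = true := by
        have : m+1+(b-m-1) = b := by omega
        rw [this]
        exact hall x le_rfl (by omega)
      rw [W_black x _ (b-m-1) he n (by omega)]
      have hx' : x + 1 = m + 1 := by omega
      rw [hx', Vx_top]
      simp only [Equiv.Perm.one_apply]
      omega
  | succ d ih =>
      intro x hxd hx1 b hb1 hb2 hall
      rw [Vx_succ m n col x hx1 (by omega), Equiv.Perm.mul_apply]
      have hc : x + b - m - 1 = x + (b - m - 1) := by omega
      rw [hc]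
      have he : col (x, m+1+(b-m-1)) = true := by
        have : m+1+(b-m-1) = b := by omega
        rw [this]
        exact hall x le_rfl (by omega)
      rw [W_black x _ (b-m-1) he n (by omega)]
      have h2 : x + (b - m - 1) + 1 = (x+1) + b - m - 1 := by omega
      rw [h2]
      exact ih (x+1) (by omega) (by omega) b hb1 hb2 (fun a ha1 ha2 => hall a (by omega) ha2)



/-- dropping the first element of a chain gives the chain rooted strictly north-west of it -/
lemma chain_shift (m n : ℕ) (col : ℕ × ℕ → Bool) (x0 y0 t : ℕ) (X Y : ℕ → ℕ) (r s : ℕ)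
    (h : IsChainRootedAt m n col x0 y0 t X Y) (ht : 1 ≤ t) (hX1 : X 1 = r) (hY1 : Y 1 = s)
    (hr : r + 1 ≤ m) (hs : m + 2 ≤ s) :
    IsChainRootedAt m n col (r+1) (s-1) (t-1) (fun i => X (i+1)) (fun i => Y (i+1)) := by
  obtain ⟨h1, h2, h3, h4, h5, h6⟩ := h
  have hsle : s ≤ m + n := by
    have := (h1 1 le_rfl ht).1
    rw [hY1] at this
    exact this.2.2.2
  refine ⟨?_, ?_, ?_, ?_, ?_, ?_⟩
  · intro i hi1 hit
    exact h1 (i+1) (by omega) (by omega)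
  · intro hwhite
    have hge2 : 2 ≤ t := by
      by_contra hlt
      have ht1 : t = 1 := by omega
      exact h6 ht (r+1) (s-1) ⟨by omega, by omega, by omega, by omega⟩ hwhite
        (by rw [ht1, hX1]; omega) (by rw [ht1, hY1]; omega)
    obtain ⟨ha, hb, hmin⟩ := h5 1 le_rfl (by omega)
    obtain ⟨hc, hd⟩ := hmin (r+1) (s-1) ⟨by omega, by omega, by omega, by omega⟩ hwhite
      (by rw [hX1]; omega) (by rw [hY1]; omega)
    exact ⟨by omega, by show X (1+1) = r+1; omega, by show Y (1+1) = s-1; omega⟩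
  · intro hblack ht'
    have hge2 : 2 ≤ t := by omega
    obtain ⟨ha, hb, hmin⟩ := h5 1 le_rfl (by omega)
    rw [hX1] at ha hmin
    rw [hY1] at hb hmin
    refine ⟨by show r+1 ≤ X (1+1); omega, by show Y (1+1) ≤ s-1; omega, ?_⟩
    intro a b hg hw hab hbb
    exact hmin a b hg hw (by omega) (by omega)
  · intro ht0 a b hg hw hab hbb
    have ht1 : t = 1 := by omega
    exact h6 ht a b hg hw (by rw [ht1, hX1]; omega) (by rw [ht1, hY1]; omega)
  · intro i hi1 hit
    exact h5 (i+1) (by omega) (by omega)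
  · intro ht' a b hg hw hab hbb
    have htt : t - 1 + 1 = t := by omega
    simp only [htt] at hab hbb
    exact h6 (by omega) a b hg hw hab hbb

/-- if the root `(x,y)` is black and all of row `x` up to column `y` is black, the chain
rooted at `(x,y)` is also the chain rooted at `(x+1,y)` -/
lemma chain_up (m n : ℕ) (col : ℕ × ℕ → Bool) (x y t : ℕ) (X Y : ℕ → ℕ)
    (h : IsChainRootedAt m n col x y t X Y)
    (hx1 : 1 ≤ x) (hxm : x + 1 ≤ m) (hy1 : m+1 ≤ y) (hy2 : y ≤ m+n)
    (hblack : col (x, y) = true) (hrow : ∀ b', m+1 ≤ b' → b' ≤ y → col (x, b') = true) :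
    IsChainRootedAt m n col (x+1) y t X Y := by
  obtain ⟨h1, h2, h3, h4, h5, h6⟩ := h
  refine ⟨h1, ?_, ?_, ?_, h5, h6⟩
  · intro hwhite
    have ht : 1 ≤ t := by
      rcases Nat.eq_zero_or_pos t with h0 | h0
      · exact (h4 h0 (x+1) y ⟨by omega, by omega, hy1, hy2⟩ hwhite (by omega) le_rfl).elim
      · exact h0
    obtain ⟨hX1, hY1, hmin⟩ := h3 hblack ht
    obtain ⟨hXa, hYb⟩ := hmin (x+1) y ⟨by omega, hxm, hy1, hy2⟩ hwhite (by omega) le_rfl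
    have hY1y : Y 1 = y := by omega
    have hwhite1 := (h1 1 le_rfl ht).2
    have hX1x : X 1 = x + 1 := by
      rcases Nat.eq_or_lt_of_le hX1 with hxx | hxx
      · exfalso
        rw [← hxx, hY1y] at hwhite1
        rw [hwhite1] at hblack
        exact Bool.false_ne_true hblack
      · omega
    exact ⟨ht, hX1x, hY1y⟩
  · intro hblack' ht
    obtain ⟨hX1, hY1, hmin⟩ := h3 hblack ht
    have hwhite1 := (h1 1 le_rfl ht).2
    have hgrid1 := (h1 1 le_rfl ht).1
    refine ⟨?_, hY1, fun a b hg hw hab hbb => hmin a b hg hw (by omega) hbb⟩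
    rcases Nat.eq_or_lt_of_le hX1 with hxx | hxx
    · exfalso
      have := hrow (Y 1) hgrid1.2.2.1 hY1
      rw [← hxx] at hwhite1
      rw [this] at hwhite1
      exact absurd hwhite1 (by decide)
    · omega
  · intro ht0 a b hg hw hab hbb
    exact h4 ht0 a b hg hw (by omega) hbb

lemma image_Icc_shift (f : ℕ → ℕ) (t : ℕ) (ht : 1 ≤ t) :
    Finset.image f (Finset.Icc 1 t) =
      insert (f 1) (Finset.image (fun i => f (i+1)) (Finset.Icc 1 (t-1))) := by
  ext c
  simp only [Finset.mem_image, Finset.mem_insert, Finset.mem_Icc]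
  constructor
  · rintro ⟨i, ⟨hi1, hi2⟩, rfl⟩
    by_cases hi : i = 1
    · left; rw [hi]
    · right
      refine ⟨i - 1, ⟨by omega, by omega⟩, ?_⟩
      congr 1
      omega
  · rintro (rfl | ⟨i, ⟨hi1, hi2⟩, rfl⟩)
    · exact ⟨1, ⟨le_rfl, ht⟩, rfl⟩
    · exact ⟨i + 1, ⟨by omega, by omega⟩, rfl⟩


set_option maxHeartbeats 2000000 in
theorem invariant (m n : ℕ) (col : ℕ × ℕ → Bool) (hC : IsCauchon m n col) (hn : 1 ≤ n) :
    ∀ d x, x + d = m → 1 ≤ x → ∀ k, x ≤ k → k ≤ m + n - 1 →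
    ∀ t X Y, IsChainRootedAt m n col (if k + 1 ≤ x + n then x else k+1-n)
        (if k + 1 ≤ x + n then m+1+k-x else m+n) t X Y →
    (Finset.Icc x (k-n) ⊆ (Finset.Icc x k).image (Vx m n col x) ∩ Finset.Icc 1 m) ∧
    (Finset.image X (Finset.Icc 1 t) =
      ((Finset.Icc x k).image (Vx m n col x) ∩ Finset.Icc 1 m) \ Finset.Icc x (k-n)) ∧
    (Finset.image Y (Finset.Icc 1 t) =
      Finset.Icc (m+1) (min (m+1+k-x) (m+n)) \
        ((Finset.Icc x k).image (Vx m n col x) ∩ Finset.Icc (m+1) (m+n))) ∧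
    ((Finset.Icc x k).image (Vx m n col x) ∩ Finset.Icc (m+1) (m+n) ⊆
      Finset.Icc (m+1) (min (m+1+k-x) (m+n))) := by
  intro d
  induction d with
  | zero =>
    intro x hxd hx1 k hkx hk2 t X Y hchain
    obtain rfl : m = x := by omega
    have hlow : k + 1 ≤ m + n := by omega
    rw [if_pos hlow, if_pos hlow] at hchain
    obtain ⟨h1, h2, h3, h4, h5, h6⟩ := hchain
    set e : ℕ → Bool := (fun j => col (m, m+1+j)) with he_def
    have hsplit : Vx m n col m = Vx m n col (m+1) * W m e n := Vx_succ m n col m hx1 le_rfl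
    have himg : (Icc m k).image (Vx m n col m) = Icc m (k+1) \ {D m e (k-m+1)} := by
      rw [hsplit, Equiv.Perm.coe_mul, ← Finset.image_image, W_image_low m e n k hkx (by omega),
        Vx_top]
      simp
    set dd := D m e (k-m+1) with hdd_def
    have hdd1 : m ≤ dd := D_ge m e _
    have hdd1' : dd ≤ k + 1 := le_trans (D_le m e _) (by omega)
    by_cases hcol : col (m, m+1+k-m) = true
    · -- the root is black
      have hek : e (k-m) = true := by
        rw [he_def]
        show col (m, m+1+(k-m)) = true
        have h9 : m+1+(k-m) = m+1+k-m := by omega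
        rw [h9]
        exact hcol
      have hdd2 : dd ≤ k := by
        rw [hdd_def, show k-m+1 = (k-m)+1 from rfl, D_eq_of_black m e (k-m) hek]
        have := D_le m e (k-m)
        omega
      have hrowb : ∀ b', dd < b' → b' ≤ m+1+k-m → col (m, b') = true := by
        intro b' hb1 hb2
        have h := D_black m e (k-m+1) (b'-m-1) (by omega) (by rw [← hdd_def]; omega)
        rw [he_def] at h
        simp only at h
        have h9 : m+1+(b'-m-1) = b' := by omega
        rwa [h9] at h
      by_cases hddm : dd = m
      · -- whole portion of the row is black : empty chain
        have ht0 : t = 0 := by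
          by_contra ht
          have ht' : 1 ≤ t := by omega
          obtain ⟨hX1ge, hY1le, hmin⟩ := h3 hcol ht'
          obtain ⟨hg, hw⟩ := h1 1 le_rfl ht'
          obtain ⟨hg1, hg2, hg3, hg4⟩ := hg
          have hX1m : X 1 = m := by omega
          have hbl := hrowb (Y 1) (by omega) hY1le
          rw [hX1m, hbl] at hw
          exact absurd hw (by decide)
        subst ht0
        have hIcc0 : Finset.Icc 1 0 = (∅ : Finset ℕ) := by simp
        rw [hIcc0, Finset.image_empty, Finset.image_empty, himg]
        refine ⟨?_, ?_, ?_, ?_⟩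
        · intro c hc
          simp only [Finset.mem_Icc] at hc
          omega
        · ext c
          simp only [Finset.notMem_empty, Finset.mem_sdiff, Finset.mem_inter, Finset.mem_Icc,
            Finset.mem_singleton, false_iff]
          omega
        · ext c
          simp only [Finset.notMem_empty, Finset.mem_sdiff, Finset.mem_inter, Finset.mem_Icc,
            Finset.mem_singleton, false_iff]
          omega
        · intro c hc
          simp only [Finset.mem_inter, Finset.mem_sdiff, Finset.mem_Icc,
            Finset.mem_singleton] at hc
          simp only [Finset.mem_Icc]
          omega
      · -- there is a white square (m, dd) in the row
        have hddm1 : m + 1 ≤ dd := by omega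
        have hwsq : col (m, dd) = false := by
          have h := D_white m e (k-m+1) (by rw [← hdd_def]; omega)
          rw [← hdd_def, he_def] at h
          simp only at h
          have h9 : m+1+(dd-m-1) = dd := by omega
          rwa [h9] at h
        have ht : 1 ≤ t := by
          rcases Nat.eq_zero_or_pos t with h0 | h0
          · exact (h4 h0 m dd ⟨hx1, le_rfl, hddm1, by omega⟩ hwsq le_rfl (by omega)).elim
          · exact h0
        obtain ⟨hX1ge, hY1le, hmin⟩ := h3 hcol ht
        obtain ⟨hg, hw⟩ := h1 1 le_rfl ht
        obtain ⟨hg1, hg2, hg3, hg4⟩ := hg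
        have hX1 : X 1 = m := by omega
        obtain ⟨_, hY1ge⟩ := hmin m dd ⟨hx1, le_rfl, hddm1, by omega⟩ hwsq le_rfl (by omega)
        have hY1 : Y 1 = dd := by
          by_contra hne
          have hbl := hrowb (Y 1) (by omega) hY1le
          rw [hX1, hbl] at hw
          exact absurd hw (by decide)
        have ht1 : t = 1 := by
          by_contra hne
          obtain ⟨hlt, _, _⟩ := h5 1 le_rfl (by omega)
          obtain ⟨hg', _⟩ := h1 (1+1) (by omega) (by omega)
          obtain ⟨_, hg2', _, _⟩ := hg'
          omega
        subst ht1
        rw [Finset.Icc_self, Finset.image_singleton, Finset.image_singleton, himg, hX1, hY1]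
        refine ⟨?_, ?_, ?_, ?_⟩
        · intro c hc
          simp only [Finset.mem_Icc] at hc
          omega
        · ext c
          simp only [Finset.mem_singleton, Finset.mem_sdiff, Finset.mem_inter, Finset.mem_Icc]
          omega
        · ext c
          simp only [Finset.mem_singleton, Finset.mem_sdiff, Finset.mem_inter, Finset.mem_Icc]
          omega
        · intro c hc
          simp only [Finset.mem_inter, Finset.mem_sdiff, Finset.mem_Icc,
            Finset.mem_singleton] at hc
          simp only [Finset.mem_Icc]
          omega
    · -- the root is white
      have hcol' : col (m, m+1+k-m) = false := by simpa using hcol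
      have hek : e (k-m) = false := by
        rw [he_def]
        show col (m, m+1+(k-m)) = false
        have h9 : m+1+(k-m) = m+1+k-m := by omega
        rw [h9]
        exact hcol'
      have hdd : dd = k+1 := by
        rw [hdd_def, show k-m+1 = (k-m)+1 from rfl, D_eq_of_white m e (k-m) hek]
        omega
      obtain ⟨ht, hX1, hY1⟩ := h2 hcol'
      have ht1 : t = 1 := by
        by_contra hne
        obtain ⟨hlt, _, _⟩ := h5 1 le_rfl (by omega)
        obtain ⟨hg', _⟩ := h1 (1+1) (by omega) (by omega)
        obtain ⟨_, hg2', _, _⟩ := hg'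
        omega
      subst ht1
      rw [Finset.Icc_self, Finset.image_singleton, Finset.image_singleton, himg, hdd, hX1, hY1]
      refine ⟨?_, ?_, ?_, ?_⟩
      · intro c hc
        simp only [Finset.mem_Icc] at hc
        omega
      · ext c
        simp only [Finset.mem_singleton, Finset.mem_sdiff, Finset.mem_inter, Finset.mem_Icc]
        omega
      · ext c
        simp only [Finset.mem_singleton, Finset.mem_sdiff, Finset.mem_inter, Finset.mem_Icc]
        omega
      · intro c hc
        simp only [Finset.mem_inter, Finset.mem_sdiff, Finset.mem_Icc,
          Finset.mem_singleton] at hc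
        simp only [Finset.mem_Icc]
        omega
  | succ d ih =>
    intro x hxd hx1 k hkx hk2 t X Y hchain
    have hxm : x ≤ m := by omega
    have hxm' : x + 1 ≤ m := by omega
    set e : ℕ → Bool := (fun j => col (x, m+1+j)) with he_def
    have hsplit : Vx m n col x = Vx m n col (x+1) * W x e n := Vx_succ m n col x hx1 hxm
    have himg0 : ∀ S : Finset ℕ, S.image (Vx m n col x)
        = (S.image (W x e n)).image (Vx m n col (x+1)) := by
      intro S
      rw [hsplit, Equiv.Perm.coe_mul, ← Finset.image_image]
    have hVfix : Vx m n col (x+1) x = x := Vx_apply_lt m n col (x+1) x (by omega)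
    by_cases hlow : k + 1 ≤ x + n
    · -- LOW boxes : root in the bottom row of the subgrid
      rw [if_pos hlow, if_pos hlow] at hchain
      obtain ⟨h1, h2, h3, h4, h5, h6⟩ := id hchain
      by_cases hcolB : col (x, m+1+k-x) = true
      · -- CASE B : the root is black
        have hekB : e (k-x) = true := by
          rw [he_def]
          show col (x, m+1+(k-x)) = true
          have h9 : m+1+(k-x) = m+1+k-x := by omega
          rw [h9]
          exact hcolB
        set dd := D x e (k-x+1) with hdd_def
        have hdd1 : x ≤ dd := D_ge x e _
        have hdd2 : dd ≤ k := by
          rw [hdd_def, show k-x+1 = (k-x)+1 from rfl, D_eq_of_black x e (k-x) hekB]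
          have := D_le x e (k-x)
          omega
        have hWB : (Icc x k).image (W x e n) = Icc x (k+1) \ {dd} :=
          W_image_low x e n k hkx (by omega)
        have hrowb : ∀ b', m+dd-x < b' → b' ≤ m+1+k-x → col (x, b') = true := by
          intro b' hb1 hb2
          have h := D_black x e (k-x+1) (b'-m-1) (by omega) (by rw [← hdd_def]; omega)
          rw [he_def] at h
          simp only at h
          have h9 : m+1+(b'-m-1) = b' := by omega
          rwa [h9] at h
        by_cases hddx : dd = x
        · -- CASE B1 : the whole row portion is black; lift the root one row up
          have hWB1 : (Icc x k).image (W x e n) = Icc (x+1) (k+1) := by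
            rw [hWB]
            ext c
            simp only [Finset.mem_sdiff, Finset.mem_Icc, Finset.mem_singleton]
            omega
          have hI : (Icc x k).image (Vx m n col x)
              = (Icc (x+1) (k+1)).image (Vx m n col (x+1)) := by
            rw [himg0, hWB1]
          have hrow : ∀ b', m+1 ≤ b' → b' ≤ m+1+k-x → col (x, b') = true :=
            fun b' h1' h2' => hrowb b' (by omega) h2'
          have hchainU := chain_up m n col x (m+1+k-x) t X Y hchain hx1 hxm'
            (by omega) (by omega) hcolB hrow
          have e1 : (if (k+1) + 1 ≤ (x+1) + n then x+1 else (k+1)+1-n) = x+1 := by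
            split <;> omega
          have e2 : (if (k+1) + 1 ≤ (x+1) + n then m+1+(k+1)-(x+1) else m+n) = m+1+k-x := by
            split <;> omega
          have hchainU' : IsChainRootedAt m n col
              (if (k+1) + 1 ≤ (x+1) + n then x+1 else (k+1)+1-n)
              (if (k+1) + 1 ≤ (x+1) + n then m+1+(k+1)-(x+1) else m+n) t X Y := by
            rw [e1, e2]
            exact hchainU
          obtain ⟨ih1, ih2, ih3, ih4⟩ := ih (x+1) (by omega) (by omega) (k+1) (by omega)
            (by omega) t X Y hchainU'
          rw [hI]
          refine ⟨?_, ?_, ?_, ?_⟩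
          · intro c hc
            simp only [Finset.mem_Icc] at hc
            omega
          · rw [ih2, show Finset.Icc (x+1) (k+1-n) = (∅ : Finset ℕ) from Finset.Icc_eq_empty
              (by omega), show Finset.Icc x (k-n) = (∅ : Finset ℕ) from Finset.Icc_eq_empty
              (by omega)]
          · rw [ih3, show min (m+1+(k+1)-(x+1)) (m+n) = min (m+1+k-x) (m+n) from by omega]
          · rw [show min (m+1+k-x) (m+n) = min (m+1+(k+1)-(x+1)) (m+n) from by omega]
            exact ih4
        · -- CASE B2 : there is a white square (x, m+dd-x) left of the root in row x
          have hddx1 : x + 1 ≤ dd := by omega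
          have hwsq : col (x, m+dd-x) = false := by
            have h := D_white x e (k-x+1) (by rw [← hdd_def]; omega)
            rw [← hdd_def, he_def] at h
            simp only at h
            have h9 : m+1+(dd-x-1) = m+dd-x := by omega
            rwa [h9] at h
          have hsplitI : Icc x (k+1) \ {dd}
              = insert x (Icc (x+1) (dd-1) ∪ Icc (dd+1) (k+1)) := by
            ext c
            simp only [Finset.mem_sdiff, Finset.mem_insert, Finset.mem_union, Finset.mem_Icc,
              Finset.mem_singleton]
            omega
          have hcols : (Icc (dd+1) (k+1)).image (Vx m n col (x+1))
              = Icc (m+dd-x+1) (m+1+k-x) := by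
            have hpt : ∀ j ∈ Icc (dd+1) (k+1), Vx m n col (x+1) j = m + j - x := by
              intro j hj
              simp only [Finset.mem_Icc] at hj
              have hb1 : m+1 ≤ m+j-x := by omega
              have hb2 : m+j-x ≤ m+n := by omega
              have hcolb : col (x, m+j-x) = true := hrowb (m+j-x) (by omega) (by omega)
              have hall : ∀ a, x+1 ≤ a → a ≤ m → col (a, m+j-x) = true := by
                intro a ha1 ha2
                rcases hC x (m+j-x) ⟨hx1, hxm, hb1, hb2⟩ hcolb with hrc | hcc
                · exact absurd (hrc (m+dd-x) (by omega) (by omega)) (by simp [hwsq])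
                · exact hcc a (by omega) ha2
              have hcp := col_pipe m n col d (x+1) (by omega) (by omega) (m+j-x) hb1 hb2 hall
              have h9 : (x+1) + (m+j-x) - m - 1 = j := by omega
              rwa [h9] at hcp
            rw [Finset.image_congr (g := fun j => m + j - x)
              (fun j hj => hpt j (by simpa using hj))]
            ext c
            simp only [Finset.mem_image, Finset.mem_Icc]
            constructor
            · rintro ⟨j, hj, rfl⟩
              omega
            · intro hc
              exact ⟨x + c - m, by omega, by omega⟩
          have hI : (Icc x k).image (Vx m n col x)
              = insert x (((Icc (x+1) (dd-1)).image (Vx m n col (x+1)))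
                ∪ Icc (m+dd-x+1) (m+1+k-x)) := by
            rw [himg0, hWB, hsplitI, Finset.image_insert, Finset.image_union, hVfix, hcols]
          have hxnot : x ∉ (Icc (x+1) (dd-1)).image (Vx m n col (x+1)) := by
            intro hmem
            obtain ⟨j, hj, hval⟩ := Finset.mem_image.mp hmem
            simp only [Finset.mem_Icc] at hj
            have := (Vx m n col (x+1)).injective (hval.trans hVfix.symm)
            omega
          -- pin down the first element of the chain
          have ht : 1 ≤ t := by
            rcases Nat.eq_zero_or_pos t with h0 | h0
            · exact (h4 h0 x (m+dd-x) ⟨hx1, hxm, by omega, by omega⟩ hwsq le_rfl (by omega)).elim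
            · exact h0
          obtain ⟨hX1ge, hY1le, hmin⟩ := h3 hcolB ht
          obtain ⟨hg, hwY⟩ := h1 1 le_rfl ht
          obtain ⟨hg1, hg2, hg3, hg4⟩ := hg
          obtain ⟨hX1le, hY1ge⟩ := hmin x (m+dd-x) ⟨hx1, hxm, by omega, by omega⟩ hwsq
            le_rfl (by omega)
          have hX1 : X 1 = x := by omega
          have hY1 : Y 1 = m+dd-x := by
            by_contra hne
            have hbl := hrowb (Y 1) (by omega) hY1le
            rw [hX1, hbl] at hwY
            exact absurd hwY (by decide)
          have hfacts : (Finset.image (fun i => X (i+1)) (Finset.Icc 1 (t-1))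
                = ((Icc (x+1) (dd-1)).image (Vx m n col (x+1))) ∩ Finset.Icc 1 m) ∧
              (Finset.image (fun i => Y (i+1)) (Finset.Icc 1 (t-1))
                = Finset.Icc (m+1) (m+dd-x-1)
                  \ (((Icc (x+1) (dd-1)).image (Vx m n col (x+1))) ∩ Finset.Icc (m+1) (m+n))) ∧
              (((Icc (x+1) (dd-1)).image (Vx m n col (x+1))) ∩ Finset.Icc (m+1) (m+n)
                ⊆ Finset.Icc (m+1) (m+dd-x-1)) := by
            by_cases hddx2 : dd = x+1
            · -- degenerate : w = m+1 and the chain stops after its first element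
              have ht1 : t = 1 := by
                by_contra hne
                obtain ⟨_, hY2, _⟩ := h5 1 le_rfl (by omega)
                obtain ⟨⟨_, _, hg3', _⟩, _⟩ := h1 (1+1) (by omega) (by omega)
                omega
              have hI'e : (Icc (x+1) (dd-1)).image (Vx m n col (x+1)) = (∅ : Finset ℕ) := by
                rw [show Finset.Icc (x+1) (dd-1) = (∅ : Finset ℕ) from Finset.Icc_eq_empty
                  (by omega), Finset.image_empty]
              have hIcc0 : Finset.Icc 1 (t-1) = (∅ : Finset ℕ) := by
                rw [ht1]
                rfl
              rw [hI'e, hIcc0]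
              refine ⟨by simp, ?_, by simp⟩
              rw [show Finset.Icc (m+1) (m+dd-x-1) = (∅ : Finset ℕ) from Finset.Icc_eq_empty
                (by omega)]
              simp
            · -- use the induction hypothesis at the box with label dd - 1
              have hchain' := chain_shift m n col x (m+1+k-x) t X Y x (m+dd-x) hchain ht hX1 hY1
                (by omega) (by omega)
              have e1 : (if (dd-1) + 1 ≤ (x+1) + n then x+1 else (dd-1)+1-n) = x+1 := by
                split <;> omega
              have e2 : (if (dd-1) + 1 ≤ (x+1) + n then m+1+(dd-1)-(x+1) else m+n)
                  = m+dd-x-1 := by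
                split <;> omega
              have hchain'' : IsChainRootedAt m n col
                  (if (dd-1) + 1 ≤ (x+1) + n then x+1 else (dd-1)+1-n)
                  (if (dd-1) + 1 ≤ (x+1) + n then m+1+(dd-1)-(x+1) else m+n)
                  (t-1) (fun i => X (i+1)) (fun i => Y (i+1)) := by
                rw [e1, e2]
                exact hchain'
              obtain ⟨ih1, ih2, ih3, ih4⟩ := ih (x+1) (by omega) (by omega) (dd-1) (by omega)
                (by omega) (t-1) _ _ hchain''
              rw [show Finset.Icc (x+1) (dd-1-n) = (∅ : Finset ℕ) from Finset.Icc_eq_empty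
                (by omega), Finset.sdiff_empty] at ih2
              rw [show min (m+1+(dd-1)-(x+1)) (m+n) = m+dd-x-1 from by omega] at ih3 ih4
              exact ⟨ih2, ih3, ih4⟩
          obtain ⟨factA, factY, factB⟩ := hfacts
          have hbnd : ∀ c, c ∈ (Icc (x+1) (dd-1)).image (Vx m n col (x+1)) → m+1 ≤ c →
              c ≤ m+n → c ≤ m+dd-x-1 := by
            intro c h1' h2' h3'
            have := factB (Finset.mem_inter.mpr ⟨h1', Finset.mem_Icc.mpr ⟨h2', h3'⟩⟩)
            exact (Finset.mem_Icc.mp this).2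
          rw [hI, show min (m+1+k-x) (m+n) = m+1+k-x from by omega]
          refine ⟨?_, ?_, ?_, ?_⟩
          · intro c hc
            simp only [Finset.mem_Icc] at hc
            omega
          · rw [image_Icc_shift X t ht, hX1, factA]
            ext c
            simp only [Finset.mem_insert, Finset.mem_inter, Finset.mem_union, Finset.mem_Icc,
              Finset.mem_sdiff]
            by_cases hcI : c ∈ (Icc (x+1) (dd-1)).image (Vx m n col (x+1))
            · have hcx : c ≠ x := fun h => hxnot (h ▸ hcI)
              simp [hcI, hcx] <;> omega
            · simp [hcI] <;> omega
          · rw [image_Icc_shift Y t ht, hY1, factY]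
            ext c
            simp only [Finset.mem_insert, Finset.mem_inter, Finset.mem_union, Finset.mem_Icc,
              Finset.mem_sdiff]
            by_cases hcI : c ∈ (Icc (x+1) (dd-1)).image (Vx m n col (x+1))
            · by_cases hcr : m+1 ≤ c ∧ c ≤ m+n
              · have := hbnd c hcI hcr.1 hcr.2
                simp [hcI] <;> omega
              · simp [hcI] <;> omega
            · simp [hcI] <;> omega
          · intro c hc
            simp only [Finset.mem_inter, Finset.mem_insert, Finset.mem_union,
              Finset.mem_Icc] at hc
            obtain ⟨hc1, hc2⟩ := hc
            simp only [Finset.mem_Icc]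
            rcases hc1 with rfl | hc1 | hc1
            · omega
            · have := hbnd c hc1 hc2.1 hc2.2
              omega
            · omega
      · -- CASE A : the root is white
        have hcol' : col (x, m+1+k-x) = false := by simpa using hcolB
        have hekA : e (k-x) = false := by
          rw [he_def]
          show col (x, m+1+(k-x)) = false
          have h9 : m+1+(k-x) = m+1+k-x := by omega
          rw [h9]
          exact hcol'
        have hDA : D x e (k-x+1) = k+1 := by
          rw [show k-x+1 = (k-x)+1 from rfl, D_eq_of_white x e (k-x) hekA]
          omega
        have hWA : (Icc x k).image (W x e n) = Icc x k := by
          rw [W_image_low x e n k hkx (by omega), hDA]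
          ext c
          simp only [Finset.mem_sdiff, Finset.mem_Icc, Finset.mem_singleton]
          omega
        obtain ⟨ht, hX1, hY1⟩ := h2 hcol'
        rcases Nat.eq_or_lt_of_le hkx with rfl | hkgt
        · -- degenerate : k = x, the root is (x, m+1) and the chain is a single square
          have ht1 : t = 1 := by
            by_contra hne
            obtain ⟨_, hY2, _⟩ := h5 1 le_rfl (by omega)
            obtain ⟨⟨_, _, hg3', _⟩, _⟩ := h1 (1+1) (by omega) (by omega)
            omega
          have hI : (Icc x x).image (Vx m n col x) = {x} := by
            rw [himg0, hWA, Finset.Icc_self, Finset.image_singleton, hVfix]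
          subst ht1
          rw [hI, Finset.Icc_self, Finset.image_singleton, Finset.image_singleton, hX1, hY1]
          refine ⟨?_, ?_, ?_, ?_⟩
          · intro c hc
            simp only [Finset.mem_Icc] at hc
            omega
          · ext c
            simp only [Finset.mem_singleton, Finset.mem_sdiff, Finset.mem_inter, Finset.mem_Icc]
            omega
          · ext c
            simp only [Finset.mem_singleton, Finset.mem_sdiff, Finset.mem_inter, Finset.mem_Icc]
            omega
          · intro c hc
            simp only [Finset.mem_inter, Finset.mem_singleton, Finset.mem_Icc] at hc
            simp only [Finset.mem_Icc]
            omega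
        · -- main : k > x, shift the chain and use the induction hypothesis at label k
          have hI : (Icc x k).image (Vx m n col x)
              = insert x ((Icc (x+1) k).image (Vx m n col (x+1))) := by
            rw [himg0, hWA, show Icc x k = insert x (Icc (x+1) k) from by
              ext c
              simp only [Finset.mem_insert, Finset.mem_Icc]
              omega, Finset.image_insert, hVfix]
          have hxnot : x ∉ (Icc (x+1) k).image (Vx m n col (x+1)) := by
            intro hmem
            obtain ⟨j, hj, hval⟩ := Finset.mem_image.mp hmem
            simp only [Finset.mem_Icc] at hj
            have := (Vx m n col (x+1)).injective (hval.trans hVfix.symm)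
            omega
          have hchain' := chain_shift m n col x (m+1+k-x) t X Y x (m+1+k-x) hchain ht hX1 hY1
            (by omega) (by omega)
          have e1 : (if k + 1 ≤ (x+1) + n then x+1 else k+1-n) = x+1 := by
            split <;> omega
          have e2 : (if k + 1 ≤ (x+1) + n then m+1+k-(x+1) else m+n) = m+1+k-x-1 := by
            split <;> omega
          have hchain'' : IsChainRootedAt m n col
              (if k + 1 ≤ (x+1) + n then x+1 else k+1-n)
              (if k + 1 ≤ (x+1) + n then m+1+k-(x+1) else m+n)
              (t-1) (fun i => X (i+1)) (fun i => Y (i+1)) := by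
            rw [e1, e2]
            exact hchain'
          obtain ⟨ih1, ih2, ih3, ih4⟩ := ih (x+1) (by omega) (by omega) k (by omega) hk2
            (t-1) _ _ hchain''
          rw [show Finset.Icc (x+1) (k-n) = (∅ : Finset ℕ) from Finset.Icc_eq_empty
            (by omega), Finset.sdiff_empty] at ih2
          rw [show min (m+1+k-(x+1)) (m+n) = m+1+k-x-1 from by omega] at ih3 ih4
          have hbnd : ∀ c, c ∈ (Icc (x+1) k).image (Vx m n col (x+1)) → m+1 ≤ c →
              c ≤ m+n → c ≤ m+1+k-x-1 := by
            intro c h1' h2' h3'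
            have := ih4 (Finset.mem_inter.mpr ⟨h1', Finset.mem_Icc.mpr ⟨h2', h3'⟩⟩)
            exact (Finset.mem_Icc.mp this).2
          rw [hI, show min (m+1+k-x) (m+n) = m+1+k-x from by omega]
          refine ⟨?_, ?_, ?_, ?_⟩
          · intro c hc
            simp only [Finset.mem_Icc] at hc
            omega
          · rw [image_Icc_shift X t ht, hX1, ih2]
            ext c
            simp only [Finset.mem_insert, Finset.mem_inter, Finset.mem_Icc, Finset.mem_sdiff]
            by_cases hcI : c ∈ (Icc (x+1) k).image (Vx m n col (x+1))
            · have hcx : c ≠ x := fun h => hxnot (h ▸ hcI)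
              simp [hcI, hcx] <;> omega
            · simp [hcI] <;> omega
          · rw [image_Icc_shift Y t ht, hY1, ih3]
            ext c
            simp only [Finset.mem_insert, Finset.mem_inter, Finset.mem_Icc, Finset.mem_sdiff]
            by_cases hcI : c ∈ (Icc (x+1) k).image (Vx m n col (x+1))
            · by_cases hcr : m+1 ≤ c ∧ c ≤ m+n
              · have := hbnd c hcI hcr.1 hcr.2
                simp [hcI] <;> omega
              · simp [hcI] <;> omega
            · simp [hcI] <;> omega
          · intro c hc
            simp only [Finset.mem_inter, Finset.mem_insert, Finset.mem_Icc] at hc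
            obtain ⟨hc1, hc2⟩ := hc
            simp only [Finset.mem_Icc]
            rcases hc1 with rfl | hc1
            · omega
            · have := hbnd c hc1 hc2.1 hc2.2
              omega
    · -- HIGH boxes : the root is strictly above the bottom row; chains coincide
      rw [if_neg hlow, if_neg hlow] at hchain
      have hWimg : (Icc x k).image (W x e n) = Icc x k := W_image_high x e n k (by omega)
      have hI : (Icc x k).image (Vx m n col x)
          = insert x ((Icc (x+1) k).image (Vx m n col (x+1))) := by
        rw [himg0, hWimg, show Icc x k = insert x (Icc (x+1) k) from by
          ext c
          simp only [Finset.mem_insert, Finset.mem_Icc]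
          omega, Finset.image_insert, hVfix]
      have hxnot : x ∉ (Icc (x+1) k).image (Vx m n col (x+1)) := by
        intro hmem
        obtain ⟨j, hj, hval⟩ := Finset.mem_image.mp hmem
        simp only [Finset.mem_Icc] at hj
        have := (Vx m n col (x+1)).injective (hval.trans hVfix.symm)
        omega
      have e1 : (if k + 1 ≤ (x+1) + n then x+1 else k+1-n) = k+1-n := by
        split <;> omega
      have e2 : (if k + 1 ≤ (x+1) + n then m+1+k-(x+1) else m+n) = m+n := by
        split <;> omega
      have hchain' : IsChainRootedAt m n col
          (if k + 1 ≤ (x+1) + n then x+1 else k+1-n)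
          (if k + 1 ≤ (x+1) + n then m+1+k-(x+1) else m+n) t X Y := by
        rw [e1, e2]
        exact hchain
      obtain ⟨ih1, ih2, ih3, ih4⟩ := ih (x+1) (by omega) (by omega) k (by omega) hk2
        t X Y hchain'
      rw [show min (m+1+k-(x+1)) (m+n) = m+n from by omega] at ih3 ih4
      have hsub1 : ∀ c, c ∈ Finset.Icc (x+1) (k-n) →
          c ∈ (Icc (x+1) k).image (Vx m n col (x+1)) ∧ c ∈ Finset.Icc 1 m := by
        intro c hc
        have := ih1 hc
        exact Finset.mem_inter.mp this
      rw [hI, show min (m+1+k-x) (m+n) = m+n from by omega]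
      refine ⟨?_, ?_, ?_, ?_⟩
      · intro c hc
        simp only [Finset.mem_Icc] at hc
        rcases Nat.eq_or_lt_of_le hc.1 with rfl | hcx
        · exact Finset.mem_inter.mpr ⟨Finset.mem_insert_self _ _,
            Finset.mem_Icc.mpr ⟨by omega, by omega⟩⟩
        · obtain ⟨hm1, hm2⟩ := hsub1 c (Finset.mem_Icc.mpr ⟨by omega, hc.2⟩)
          exact Finset.mem_inter.mpr ⟨Finset.mem_insert_of_mem hm1, hm2⟩
      · rw [ih2]
        ext c
        simp only [Finset.mem_insert, Finset.mem_inter, Finset.mem_Icc, Finset.mem_sdiff]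
        by_cases hcI : c ∈ (Icc (x+1) k).image (Vx m n col (x+1))
        · have hcx : c ≠ x := fun h => hxnot (h ▸ hcI)
          simp [hcI, hcx] <;> omega
        · simp [hcI] <;> omega
      · rw [ih3]
        have hins : insert x ((Icc (x+1) k).image (Vx m n col (x+1))) ∩ Finset.Icc (m+1) (m+n)
            = ((Icc (x+1) k).image (Vx m n col (x+1))) ∩ Finset.Icc (m+1) (m+n) := by
          rw [Finset.insert_inter_of_notMem]
          simp only [Finset.mem_Icc]
          omega
        rw [hins]
      · intro c hc
        simp only [Finset.mem_inter, Finset.mem_insert, Finset.mem_Icc] at hc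
        obtain ⟨hc1, hc2⟩ := hc
        rcases hc1 with rfl | hc1
        · simp only [Finset.mem_Icc]
          omega
        · exact ih4 (Finset.mem_inter.mpr ⟨hc1, Finset.mem_Icc.mpr hc2⟩)


end CD

/-- Let `col` be an `m × n` Cauchon diagram with associated permutation `v`, let
`k ∈ {n+1,...,m+n-1}`, put `I_k = v({1,...,k})`, and let `(X 1, Y 1),...,(X t, Y t)` be the
chain rooted at box `k` on the south-east border.  Then `{1,...,k-n} ⊆ p₁(I_k)`,
`{X 1,...,X t} = p₁(I_k) \ {1,...,k-n}`, and `{Y 1,...,Y t} = {m+1,...,m+n} \ p₂(I_k)`. -/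
theorem chain_at_boxSE_rows_cols_high
    (m n : ℕ) (hm : 2 ≤ m) (hn : 2 ≤ n)
    (col : ℕ × ℕ → Bool) (hC : IsCauchon m n col)
    (k : ℕ) (hk1 : n + 1 ≤ k) (hkn : k ≤ m + n - 1)
    (t : ℕ) (X Y : ℕ → ℕ)
    (hchain : IsChainRootedAt m n col (boxSE m n k).1 (boxSE m n k).2 t X Y) :
    Finset.Icc 1 (k - n) ⊆
      Finset.image (fun j => assocPerm m n col j) (Finset.Icc 1 k) ∩ Finset.Icc 1 m ∧
    Finset.image X (Finset.Icc 1 t) =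
      (Finset.image (fun j => assocPerm m n col j) (Finset.Icc 1 k) ∩ Finset.Icc 1 m) \
        Finset.Icc 1 (k - n) ∧
    Finset.image Y (Finset.Icc 1 t) =
      Finset.Icc (m + 1) (m + n) \
        (Finset.image (fun j => assocPerm m n col j) (Finset.Icc 1 k) ∩
          Finset.Icc (m + 1) (m + n)) := by
  have hVeq : CD.Vx m n col 1 = assocPerm m n col := by
    unfold CD.Vx assocPerm
    rw [CD.readingWord_rows, CD.readingWord_rows]
    congr 1
    apply List.map_congr_left
    intro i hi
    apply CD.rowWord_congr
    intro j hj
    have h9 : 1 ≤ m - i := by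
      have := List.mem_range.mp hi
      omega
    simp [h9]
  have e1 : (if k + 1 ≤ 1 + n then 1 else k+1-n) = (boxSE m n k).1 := by
    have h9 : ¬ (k ≤ n) := by omega
    simp only [boxSE, h9, if_false]
    split <;> omega
  have e2 : (if k + 1 ≤ 1 + n then m+1+k-1 else m+n) = (boxSE m n k).2 := by
    have h9 : ¬ (k ≤ n) := by omega
    simp only [boxSE, h9, if_false]
    split <;> omega
  have hchain' : IsChainRootedAt m n col (if k + 1 ≤ 1 + n then 1 else k+1-n)
      (if k + 1 ≤ 1 + n then m+1+k-1 else m+n) t X Y := by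
    rw [e1, e2]
    exact hchain
  obtain ⟨c1, c2, c3, c4⟩ := CD.invariant m n col hC (by omega) (m-1) 1 (by omega) le_rfl
    k (by omega) hkn t X Y hchain'
  have himgeq : Finset.image (fun j => assocPerm m n col j) (Finset.Icc 1 k)
      = (Finset.Icc 1 k).image (CD.Vx m n col 1) := by
    rw [hVeq]
  have hmu : min (m+1+k-1) (m+n) = m+n := by omega
  rw [hmu] at c3
  rw [himgeq]
  exact ⟨c1, c2, c3⟩
end
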